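/- arXiv:2112.12338 — 2 statements merged into one kernel-verified Lean document; each statement's English description precedes it below -/
import Mathlib

section
/- Let M = {M_1, M_2} be a binary MMDP, M^p = {M_1^p, M_2^p} its preprocessed MMDP, and M^I any informative MDP of M (with transition kernel δ^I = γ·δ_1^p + (1−γ)·δ_2^p for some γ ∈ (0,1)). A policy π achieves asymptotic perfect detection for M if and only if P_I^π({h ∈ H : inf(h) ∩ ISA^p ≠ ∅}) = 1, where P_I^π is the probability measure on the space of infinite histories induced by the kernel δ^I and the policy π from the initial state s_init. -/
open Finset Filter

/-- A history of length `t` of an MDP with states `S` and actions `A`: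
a sequence of `t+1` states and `t` actions `(s₀, a₀, s₁, …, a_{t-1}, s_t)`. -/
abbrev Hist (S A : Type) (t : ℕ) : Type := (Fin (t + 1) → S) × (Fin t → A)

/-- The last state of a history. -/
def lastState {S A : Type} {t : ℕ} (h : Hist S A t) : S := h.1 (Fin.last t)

/-- The length-`τ` prefix of a history of length `t` (for `τ < t`). -/
def prefixH {S A : Type} {t : ℕ} (h : Hist S A t) (τ : Fin t) : Hist S A τ.val :=
  (fun i => h.1 (Fin.castLE (Nat.succ_le_succ τ.isLt.le) i),
   fun i => h.2 (Fin.castLE τ.isLt.le i))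

/-- A history-dependent randomized policy over the available-action map `act`:
for every time `t` and history `h` of length `t` it gives a probability
distribution over the actions available at the last state of `h`. -/
structure Policy (S A : Type) [Fintype S] [Fintype A] (act : S → Finset A) where
  p : (t : ℕ) → Hist S A t → A → ℝ
  nonneg : ∀ (t : ℕ) (h : Hist S A t) (a : A), 0 ≤ p t h a
  sum_one : ∀ (t : ℕ) (h : Hist S A t), ∑ a ∈ act (lastState h), p t h a = 1
  zero_off : ∀ (t : ℕ) (h : Hist S A t), ∀ a ∉ act (lastState h), p t h a = 0

/-- The probability `P^π(h)` of a history `h` of length `t` under the transition kernel `δ`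
    and (the underlying map `πf` of) a policy, starting from the initial state `init`. -/
noncomputable def histProb {S A : Type} [Fintype S] [Fintype A] [DecidableEq S]
    (init : S) (δ : S → A → S → ℝ)
    (πf : (t : ℕ) → Hist S A t → A → ℝ) (t : ℕ) (h : Hist S A t) : ℝ :=
  (if h.1 0 = init then (1 : ℝ) else 0) *
    ∏ τ : Fin t,
      πf τ.val (prefixH h τ) (h.2 τ) * δ (h.1 τ.castSucc) (h.2 τ) (h.1 τ.succ)

/-- The Bhattacharyya coefficient at step `t` between the history distributions induced by
the kernels `δ1` and `δ2` under the policy map `πf`: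
`B(t,π) = Σ_{h_t} √(P₁^π(h_t)·P₂^π(h_t))`. -/
noncomputable def BC {S A : Type} [Fintype S] [Fintype A] [DecidableEq S]
    (init : S) (δ1 δ2 : S → A → S → ℝ)
    (πf : (t : ℕ) → Hist S A t → A → ℝ) (t : ℕ) : ℝ :=
  ∑ h : Hist S A t,
    Real.sqrt (histProb init δ1 πf t h * histProb init δ2 πf t h)

/-- A binary MMDP: two MDPs sharing the state space `S`, available actions `act`,
and initial state `init`, with transition kernels `δ 0` and `δ 1`. -/
structure BinMMDP (S A : Type) [Fintype S] [Fintype A] where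
  act : S → Finset A
  act_nonempty : ∀ s, (act s).Nonempty
  init : S
  δ : Fin 2 → S → A → S → ℝ
  δ_nonneg : ∀ i s a s', 0 ≤ δ i s a s'
  δ_sum : ∀ i s, ∀ a ∈ act s, ∑ s', δ i s a s' = 1

open MeasureTheory in
/-- The space of infinite histories (trajectories) `(s₀, a₀, s₁, a₁, …)`, recorded as the
sequence of state-action pairs, equipped with the product σ-algebra of the discrete
σ-algebras (so that the σ-algebra is generated by the cylinder sets). -/
def Traj (S A : Type) : Type := ℕ → S × A

instance (S A : Type) : MeasurableSpace (Traj S A) :=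
  @MeasurableSpace.pi ℕ (fun _ => S × A) (fun _ => ⊤)

/-- The cylinder set of infinite histories extending the finite history `h`. -/
def Cyl {S A : Type} {t : ℕ} (h : Hist S A t) : Set (Traj S A) :=
  {ω | (∀ i : Fin (t + 1), (ω i.val).1 = h.1 i) ∧ ∀ i : Fin t, (ω i.val).2 = h.2 i}

/-- `inf(ω)`: the set of state-action pairs occurring infinitely often in the infinite
history `ω`. -/
def InfOften {S A : Type} (ω : Traj S A) : Set (S × A) :=
  {p | {n : ℕ | ω n = p}.Infinite}

/-- `P` is the probability measure on infinite histories induced from the initial state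
`init` by the transition kernel `δ` and the policy map `πf` (the Ionescu–Tulcea measure):
it is a probability measure whose value on every cylinder set is the probability of the
corresponding finite history. -/
def IsInduced {S A : Type} [Fintype S] [Fintype A] [DecidableEq S]
    (init : S) (δ : S → A → S → ℝ) (πf : (t : ℕ) → Hist S A t → A → ℝ)
    (P : MeasureTheory.Measure (Traj S A)) : Prop :=
  MeasureTheory.IsProbabilityMeasure P ∧
    ∀ (t : ℕ) (h : Hist S A t),
      P (Cyl h) = ENNReal.ofReal (histProb init δ πf t h)

section Preprocessing

open scoped Classical

variable {S A : Type}

/-- A state-action pair `(s,a)` is revealing for the pair of kernels `δ 0, δ 1` if the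
supports of `δ 0 (·|s,a)` and `δ 1 (·|s,a)` are disjoint. -/
def RevealingPair (δ : Fin 2 → S → A → S → ℝ) (s : S) (a : A) : Prop :=
  ∀ s' : S, ¬(0 < δ 0 s a s' ∧ 0 < δ 1 s a s')

/-- A state-action pair `(s,a)` is informative for the pair of kernels `δ 0, δ 1` if
`δ 0 (·|s,a) ≠ δ 1 (·|s,a)` and their supports intersect. -/
def InformativePair (δ : Fin 2 → S → A → S → ℝ) (s : S) (a : A) : Prop :=
  δ 0 s a ≠ δ 1 s a ∧ ∃ s' : S, 0 < δ 0 s a s' ∧ 0 < δ 1 s a s'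

/-- A state is revealing if some available action at it forms a revealing pair. -/
def RevealingState (act : S → Finset A) (δ : Fin 2 → S → A → S → ℝ) (s : S) : Prop :=
  ∃ a ∈ act s, RevealingPair δ s a

variable [Fintype S] [Fintype A] [DecidableEq S] [DecidableEq A]

/-- Available actions of the preprocessed MMDP.  The state space is `S ⊕ Fin 2`, where
`Sum.inr i` is the terminal state `⊥_{i+1}`; at a revealing state only the chosen revealing
action `ra s` remains, at the terminal state `⊥_j` only the fresh action `a^{⊥_j}`
(encoded `Sum.inr j`) is available, and all other actions are kept. -/
noncomputable def actp (act : S → Finset A) (δ : Fin 2 → S → A → S → ℝ) (ra : S → A) :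
    S ⊕ Fin 2 → Finset (A ⊕ Fin 2)
  | Sum.inl s =>
      if RevealingState act δ s then {Sum.inl (ra s)} else (act s).image Sum.inl
  | Sum.inr j => {Sum.inr j}

/-- The transition kernel `δ_i^p` of the `i`-th preprocessed MDP `M_i^p`:
the terminal states `⊥_j = Sum.inr j` are absorbing; a revealing pair `(s,a)` moves to
`⊥_i` with probability one; an informative pair `(s,a)` keeps the probabilities of
successors in the common support and redirects the remaining mass of `δ i (·|s,a)` to
`⊥_i`; all other transitions are unchanged. -/
noncomputable def δp (δ : Fin 2 → S → A → S → ℝ) (i : Fin 2) :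
    S ⊕ Fin 2 → A ⊕ Fin 2 → S ⊕ Fin 2 → ℝ
  | Sum.inr j, _, s' => if s' = Sum.inr j then 1 else 0
  | Sum.inl s, Sum.inl a, Sum.inl s' =>
      if RevealingPair δ s a then 0
      else if InformativePair δ s a then
        (if 0 < δ (1 - i) s a s' then δ i s a s' else 0)
      else δ i s a s'
  | Sum.inl s, Sum.inl a, Sum.inr j =>
      if RevealingPair δ s a then (if j = i then 1 else 0)
      else if InformativePair δ s a then
        (if j = i then
          ∑ s' ∈ Finset.univ.filter (fun s' : S => ¬ 0 < δ (1 - i) s a s'), δ i s a s'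
        else 0)
      else 0
  | Sum.inl _, Sum.inr _, _ => 0

/-- `ISA^p`: the set of state-action pairs of the preprocessed MMDP that are informative
for the preprocessed MMDP, together with the two terminal pairs `(⊥_j, a^{⊥_j})`. -/
def ISAp (act : S → Finset A) (δ : Fin 2 → S → A → S → ℝ) (ra : S → A) :
    Set ((S ⊕ Fin 2) × (A ⊕ Fin 2)) :=
  {x | x.2 ∈ actp act δ ra x.1 ∧ InformativePair (fun i => δp δ i) x.1 x.2}
    ∪ {x | ∃ j : Fin 2, x = (Sum.inr j, Sum.inr j)}

end Preprocessing


set_option linter.unusedSectionVars false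
set_option linter.unusedVariables false
set_option linter.unreachableTactic false
set_option linter.unusedTactic false
set_option maxHeartbeats 1000000
open scoped Classical

variable {S A : Type}

lemma snoc_app_castSucc {n : ℕ} {α : Type*} (g : Fin n → α) (x : α) (i : Fin n) :
    Fin.snoc (α := fun _ => α) g x i.castSucc = g i :=
  Fin.snoc_castSucc (α := fun _ => α) x g i

lemma snoc_app_last {n : ℕ} {α : Type*} (g : Fin n → α) (x : α) :
    Fin.snoc (α := fun _ => α) g x (Fin.last n) = x :=
  Fin.snoc_last (α := fun _ => α) x g

lemma snoc_of_lt {n : ℕ} {α : Type*} (g : Fin n → α) (x : α) (j : Fin (n + 1))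
    (hj : j.val < n) : Fin.snoc (α := fun _ => α) g x j = g ⟨j.val, hj⟩ := by
  have e : j = Fin.castSucc ⟨j.val, hj⟩ := by ext; rfl
  conv_lhs => rw [e]
  exact snoc_app_castSucc g x _

/-- Extend a history by one action and one state. -/
def hSnoc {t : ℕ} (h : Hist S A t) (a : A) (s : S) : Hist S A (t + 1) :=
  (Fin.snoc h.1 s, Fin.snoc h.2 a)

/-- Drop the last action and state of a history. -/
def hTrunc {t : ℕ} (h : Hist S A (t + 1)) : Hist S A t :=
  (fun i => h.1 i.castSucc, fun i => h.2 i.castSucc)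

lemma hTrunc_hSnoc {t : ℕ} (h : Hist S A t) (a : A) (s : S) :
    hTrunc (hSnoc h a s) = h := by
  refine Prod.ext (funext fun i => ?_) (funext fun i => ?_)
  · exact snoc_app_castSucc h.1 s i
  · exact snoc_app_castSucc h.2 a i

lemma hSnoc_hTrunc {t : ℕ} (h : Hist S A (t + 1)) :
    hSnoc (hTrunc h) (h.2 (Fin.last t)) (h.1 (Fin.last (t + 1))) = h := by
  refine Prod.ext (funext fun i => ?_) (funext fun i => ?_)
  · refine Fin.lastCases ?_ (fun j => ?_) i
    · exact snoc_app_last _ _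
    · exact snoc_app_castSucc _ _ j
  · refine Fin.lastCases ?_ (fun j => ?_) i
    · exact snoc_app_last _ _
    · exact snoc_app_castSucc _ _ j

/-- Histories of length `t+1` are equivalent to (history of length `t`, action, state). -/
def hEquiv (S A : Type) (t : ℕ) : Hist S A (t + 1) ≃ Hist S A t × A × S where
  toFun h := (hTrunc h, h.2 (Fin.last t), h.1 (Fin.last (t + 1)))
  invFun x := hSnoc x.1 x.2.1 x.2.2
  left_inv h := hSnoc_hTrunc h
  right_inv x := by
    obtain ⟨h, a, s⟩ := x
    show (hTrunc (hSnoc h a s), (hSnoc h a s).2 (Fin.last t),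
      (hSnoc h a s).1 (Fin.last (t + 1))) = (h, a, s)
    rw [hTrunc_hSnoc]
    have e1 : (hSnoc h a s).2 (Fin.last t) = a := snoc_app_last h.2 a
    have e2 : (hSnoc h a s).1 (Fin.last (t + 1)) = s := snoc_app_last h.1 s
    rw [e1, e2]

/-- Histories of length 0 are equivalent to `S`. -/
def hEquiv0 (S A : Type) : Hist S A 0 ≃ S where
  toFun h := h.1 0
  invFun s := (fun _ => s, fun i => i.elim0)
  left_inv h := by
    refine Prod.ext (funext fun i => ?_) (funext fun i => i.elim0)
    have : i = 0 := Fin.ext (by omega)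
    rw [this]
  right_inv s := rfl

lemma sum_hist_succ {t : ℕ} [Fintype S] [Fintype A] (f : Hist S A (t + 1) → ℝ) :
    ∑ h : Hist S A (t + 1), f h
      = ∑ h : Hist S A t, ∑ a : A, ∑ s : S, f (hSnoc h a s) := by
  rw [← Equiv.sum_comp (hEquiv S A t).symm f, Fintype.sum_prod_type]
  refine Finset.sum_congr rfl fun h _ => ?_
  rw [Fintype.sum_prod_type]
  rfl

lemma sum_hist_zero [Fintype S] [Fintype A] (f : Hist S A 0 → ℝ) :
    ∑ h : Hist S A 0, f h = ∑ s : S, f (fun _ => s, fun i => i.elim0) := by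
  rw [← Equiv.sum_comp (hEquiv0 S A).symm f]
  rfl

lemma prefixH_hSnoc_castSucc {t : ℕ} (h : Hist S A t) (a : A) (s : S) (τ : Fin t) :
    prefixH (hSnoc h a s) τ.castSucc = prefixH h τ := by
  refine Prod.ext (funext fun i => ?_) (funext fun i => ?_)
  · exact snoc_of_lt h.1 s _ (lt_of_lt_of_le i.isLt (Nat.succ_le_succ τ.isLt.le))
  · exact snoc_of_lt h.2 a _ (lt_of_lt_of_le i.isLt τ.isLt.le)

lemma prefixH_hSnoc_last {t : ℕ} (h : Hist S A t) (a : A) (s : S) :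
    prefixH (hSnoc h a s) (Fin.last t) = h := by
  refine Prod.ext (funext fun i => ?_) (funext fun i => ?_)
  · exact snoc_of_lt h.1 s _ i.isLt
  · exact snoc_of_lt h.2 a _ i.isLt

lemma histProb_hSnoc [Fintype S] [Fintype A] [DecidableEq S]
    (init : S) (d : S → A → S → ℝ) (πf : (t : ℕ) → Hist S A t → A → ℝ)
    {t : ℕ} (h : Hist S A t) (a : A) (s : S) :
    histProb init d πf (t + 1) (hSnoc h a s)
      = histProb init d πf t h * (πf t h a * d (lastState h) a s) := by
  unfold histProb
  rw [Fin.prod_univ_castSucc]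
  have h0 : (hSnoc h a s).1 0 = h.1 0 := by
    have e : (0 : Fin (t + 2)) = Fin.castSucc 0 := by ext; rfl
    show Fin.snoc (α := fun _ => S) h.1 s (0 : Fin (t + 2)) = h.1 0
    rw [e, snoc_app_castSucc]
  rw [h0]
  have hlast : πf (Fin.last t).1 (prefixH (hSnoc h a s) (Fin.last t))
        ((hSnoc h a s).2 (Fin.last t)) *
        d ((hSnoc h a s).1 (Fin.last t).castSucc) ((hSnoc h a s).2 (Fin.last t))
          ((hSnoc h a s).1 (Fin.last t).succ)
      = πf t h a * d (lastState h) a s := by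
    rw [prefixH_hSnoc_last]
    have h2 : (hSnoc h a s).2 (Fin.last t) = a := snoc_app_last h.2 a
    have h3 : (hSnoc h a s).1 (Fin.last t).castSucc = lastState h :=
      snoc_app_castSucc h.1 s (Fin.last t)
    have h4 : (hSnoc h a s).1 (Fin.last t).succ = s := by
      show Fin.snoc (α := fun _ => S) h.1 s (Fin.last t).succ = s
      rw [Fin.succ_last]
      exact snoc_app_last h.1 s
    rw [h2, h3, h4]
    rfl
  rw [hlast]
  have hcast : ∀ τ : Fin t,
      πf (τ.castSucc).1 (prefixH (hSnoc h a s) τ.castSucc)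
          ((hSnoc h a s).2 τ.castSucc) *
        d ((hSnoc h a s).1 (τ.castSucc).castSucc) ((hSnoc h a s).2 τ.castSucc)
          ((hSnoc h a s).1 (τ.castSucc).succ)
      = πf τ.1 (prefixH h τ) (h.2 τ) * d (h.1 τ.castSucc) (h.2 τ) (h.1 τ.succ) := by
    intro τ
    rw [prefixH_hSnoc_castSucc]
    have h2 : (hSnoc h a s).2 τ.castSucc = h.2 τ := snoc_app_castSucc h.2 a τ
    have h3 : (hSnoc h a s).1 (τ.castSucc).castSucc = h.1 τ.castSucc :=
      snoc_app_castSucc h.1 s τ.castSucc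
    have h4 : (hSnoc h a s).1 (τ.castSucc).succ = h.1 τ.succ := by
      show Fin.snoc (α := fun _ => S) h.1 s (τ.castSucc).succ = h.1 τ.succ
      rw [Fin.succ_castSucc]
      exact snoc_app_castSucc h.1 s τ.succ
    rw [h2, h3, h4]
    rfl
  rw [Finset.prod_congr rfl (fun τ _ => hcast τ)]
  ring

lemma histProb_zero [Fintype S] [Fintype A] [DecidableEq S]
    (init : S) (d : S → A → S → ℝ) (πf : (t : ℕ) → Hist S A t → A → ℝ)
    (h : Hist S A 0) :
    histProb init d πf 0 h = if h.1 0 = init then 1 else 0 := by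
  unfold histProb
  simp


section MDPFacts
open scoped Classical

variable {S A : Type} [Fintype S] [Fintype A] [DecidableEq S] [DecidableEq A]

lemma δp_inr (δ : Fin 2 → S → A → S → ℝ) (i j : Fin 2) (ap : A ⊕ Fin 2)
    (s' : S ⊕ Fin 2) :
    δp δ i (Sum.inr j) ap s' = if s' = Sum.inr j then 1 else 0 := rfl

lemma δp_inl_inr_act (δ : Fin 2 → S → A → S → ℝ) (i j : Fin 2) (s : S)
    (s' : S ⊕ Fin 2) : δp δ i (Sum.inl s) (Sum.inr j) s' = 0 := rfl

lemma δp_lll (δ : Fin 2 → S → A → S → ℝ) (i : Fin 2) (s : S) (a : A) (s' : S) :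
    δp δ i (Sum.inl s) (Sum.inl a) (Sum.inl s')
      = if RevealingPair δ s a then 0
        else if InformativePair δ s a then
          (if 0 < δ (1 - i) s a s' then δ i s a s' else 0)
        else δ i s a s' := rfl

lemma δp_llr (δ : Fin 2 → S → A → S → ℝ) (i : Fin 2) (s : S) (a : A) (j : Fin 2) :
    δp δ i (Sum.inl s) (Sum.inl a) (Sum.inr j)
      = if RevealingPair δ s a then (if j = i then 1 else 0)
        else if InformativePair δ s a then
          (if j = i then
            ∑ s' ∈ Finset.univ.filter (fun s' : S => ¬ 0 < δ (1 - i) s a s'), δ i s a s'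
          else 0)
        else 0 := rfl

lemma δp_nonneg (δ : Fin 2 → S → A → S → ℝ) (hδ0 : ∀ i s a s', 0 ≤ δ i s a s')
    (i : Fin 2) (sp : S ⊕ Fin 2) (ap : A ⊕ Fin 2) (s' : S ⊕ Fin 2) :
    0 ≤ δp δ i sp ap s' := by
  rcases sp with s | j
  · rcases ap with a | j'
    · rcases s' with s' | j''
      · rw [δp_lll]
        split_ifs <;> first | positivity | exact hδ0 i s a s'
      · rw [δp_llr]
        split_ifs <;>
          first
            | positivity
            | exact Finset.sum_nonneg fun x _ => hδ0 i s a x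
    · rw [δp_inl_inr_act]
  · rw [δp_inr]
    split_ifs <;> norm_num

lemma sum_fin2 (f : Fin 2 → ℝ) : ∑ j : Fin 2, f j = f 0 + f 1 := by
  simp [Fin.sum_univ_two]

lemma δp_sum_one (act : S → Finset A) (δ : Fin 2 → S → A → S → ℝ) (ra : S → A)
    (hδ0 : ∀ i s a s', 0 ≤ δ i s a s')
    (hδ1 : ∀ i s, ∀ a ∈ act s, ∑ s', δ i s a s' = 1)
    (hra : ∀ s, RevealingState act δ s → ra s ∈ act s ∧ RevealingPair δ s (ra s))
    (i : Fin 2) (sp : S ⊕ Fin 2) (ap : A ⊕ Fin 2) (hap : ap ∈ actp act δ ra sp) :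
    ∑ s' : S ⊕ Fin 2, δp δ i sp ap s' = 1 := by
  rcases sp with s | j
  · -- at a left state
    by_cases hrs : RevealingState act δ s
    · -- revealing state: only action is `ra s`, a revealing pair
      have hap' : ap = Sum.inl (ra s) := by
        simpa [actp, hrs] using hap
      subst hap'
      have hrev : RevealingPair δ s (ra s) := (hra s hrs).2
      rw [Fintype.sum_sum_type]
      simp only [δp_lll, δp_llr, if_pos hrev]
      rw [sum_fin2]
      fin_cases i <;> simp
    · -- non-revealing state: available actions are original ones
      simp only [actp, if_neg hrs] at hap
      obtain ⟨a, ha, rfl⟩ := Finset.mem_image.mp hap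
      have hnrev : ¬ RevealingPair δ s a := fun hrev => hrs ⟨a, ha, hrev⟩
      rw [Fintype.sum_sum_type]
      simp only [δp_lll, δp_llr, if_neg hnrev]
      by_cases hinf : InformativePair δ s a
      · simp only [if_pos hinf]
        rw [sum_fin2]
        have e1 : ∑ s' : S, (if 0 < δ (1 - i) s a s' then δ i s a s' else 0)
            = ∑ s' ∈ Finset.univ.filter (fun s' : S => 0 < δ (1 - i) s a s'), δ i s a s' := by
          rw [Finset.sum_filter]
        have e2 : ((if (0 : Fin 2) = i then
              ∑ s' ∈ Finset.univ.filter (fun s' : S => ¬ 0 < δ (1 - i) s a s'), δ i s a s'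
              else 0)
            + if (1 : Fin 2) = i then
              ∑ s' ∈ Finset.univ.filter (fun s' : S => ¬ 0 < δ (1 - i) s a s'), δ i s a s'
              else 0)
            = ∑ s' ∈ Finset.univ.filter (fun s' : S => ¬ 0 < δ (1 - i) s a s'), δ i s a s' := by
          fin_cases i <;> simp
        rw [e1, e2, Finset.sum_filter_add_sum_filter_not]
        exact hδ1 i s a ha
      · simp only [if_neg hinf]
        rw [sum_fin2]
        simpa using hδ1 i s a ha
  · -- absorbing state
    rw [Fintype.sum_sum_type]
    simp only [δp_inr]
    rw [sum_fin2]
    fin_cases j <;> simp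

end MDPFacts

section Bounds
open scoped Classical

variable {S A : Type} [Fintype S] [Fintype A] [DecidableEq S] [DecidableEq A]

lemma sqrt_mul_le_half_add {x y : ℝ} (hx : 0 ≤ x) (hy : 0 ≤ y) :
    Real.sqrt (x * y) ≤ (x + y) / 2 := by
  rw [Real.sqrt_mul hx y]
  nlinarith [Real.sq_sqrt hx, Real.sq_sqrt hy, Real.sqrt_nonneg x, Real.sqrt_nonneg y,
    sq_nonneg (Real.sqrt x - Real.sqrt y)]

lemma sqrt_mul_lt_half_add {x y : ℝ} (hx : 0 ≤ x) (hy : 0 ≤ y) (hne : x ≠ y) :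
    Real.sqrt (x * y) < (x + y) / 2 := by
  rw [Real.sqrt_mul hx y]
  have hs : Real.sqrt x ≠ Real.sqrt y := fun hcon =>
    hne ((Real.sqrt_inj hx hy).mp hcon)
  have h2 : 0 < (Real.sqrt x - Real.sqrt y) ^ 2 :=
    lt_of_le_of_ne (sq_nonneg _) (Ne.symm (pow_ne_zero 2 (sub_ne_zero.mpr hs)))
  nlinarith [Real.sq_sqrt hx, Real.sq_sqrt hy]

lemma sqrt_mul_le_M {γ x y : ℝ} (hγ0 : 0 < γ) (hγ1 : γ < 1) (hx : 0 ≤ x) (hy : 0 ≤ y) :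
    Real.sqrt (x * y) ≤ (1 / (2 * Real.sqrt (γ * (1 - γ)))) * (γ * x + (1 - γ) * y) := by
  have hg : 0 < Real.sqrt (γ * (1 - γ)) := Real.sqrt_pos.mpr (by nlinarith)
  have key : Real.sqrt (γ * (1 - γ)) * Real.sqrt (x * y) ≤ (γ * x + (1 - γ) * y) / 2 := by
    have e : Real.sqrt (γ * (1 - γ)) * Real.sqrt (x * y)
        = Real.sqrt ((γ * x) * ((1 - γ) * y)) := by
      rw [← Real.sqrt_mul (by nlinarith) (x * y)]
      congr 1
      ring
    rw [e]
    exact sqrt_mul_le_half_add (mul_nonneg hγ0.le hx) (mul_nonneg (by linarith) hy)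
  rw [div_mul_eq_mul_div, one_mul, le_div_iff₀ (by positivity)]
  calc Real.sqrt (x * y) * (2 * Real.sqrt (γ * (1 - γ)))
      = 2 * (Real.sqrt (γ * (1 - γ)) * Real.sqrt (x * y)) := by ring
    _ ≤ 2 * ((γ * x + (1 - γ) * y) / 2) := by linarith
    _ = γ * x + (1 - γ) * y := by ring

lemma one_le_M {γ : ℝ} (hγ0 : 0 < γ) (hγ1 : γ < 1) :
    1 ≤ 1 / (2 * Real.sqrt (γ * (1 - γ))) := by
  have hg : 0 < Real.sqrt (γ * (1 - γ)) := Real.sqrt_pos.mpr (by nlinarith)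
  rw [le_div_iff₀ (by positivity), one_mul]
  have h1 : Real.sqrt (γ * (1 - γ)) ^ 2 = γ * (1 - γ) :=
    Real.sq_sqrt (by nlinarith)
  nlinarith [sq_nonneg (2 * Real.sqrt (γ * (1 - γ)) - 1), sq_nonneg (2 * γ - 1)]

variable (δ : Fin 2 → S → A → S → ℝ)

lemma not_inf_rows {s : S} {a : A} (hnr : ¬ RevealingPair δ s a)
    (hni : ¬ InformativePair δ s a) : δ 0 s a = δ 1 s a := by
  by_contra hne
  unfold RevealingPair at hnr
  push_neg at hnr
  exact hni ⟨hne, hnr⟩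

lemma eq_rows_δp {s : S} {a : A} (hnr : ¬ RevealingPair δ s a)
    (hni : ¬ InformativePair δ s a) :
    δp δ 0 (Sum.inl s) (Sum.inl a) = δp δ 1 (Sum.inl s) (Sum.inl a) := by
  have hrows := not_inf_rows δ hnr hni
  funext s'
  rcases s' with s' | j
  · rw [δp_lll, δp_lll, if_neg hnr, if_neg hnr, if_neg hni, if_neg hni]
    exact congrFun hrows s'
  · rw [δp_llr, δp_llr, if_neg hnr, if_neg hnr, if_neg hni, if_neg hni]

lemma fin2_sub_zero : (1 - 0 : Fin 2) = 1 := rfl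
lemma fin2_sub_one : (1 - 1 : Fin 2) = 0 := rfl

lemma inf_lift (hδ0 : ∀ i s a s', 0 ≤ δ i s a s') {s : S} {a : A}
    (hinf : InformativePair δ s a) :
    InformativePair (fun i => δp δ i) (Sum.inl s) (Sum.inl a) := by
  obtain ⟨hne, s', h0, h1⟩ := hinf
  have hinf' : InformativePair δ s a := ⟨hne, s', h0, h1⟩
  have hnr : ¬ RevealingPair δ s a := fun hr => hr s' ⟨h0, h1⟩
  constructor
  · -- the preprocessed rows differ
    show δp δ 0 (Sum.inl s) (Sum.inl a) ≠ δp δ 1 (Sum.inl s) (Sum.inl a)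
    by_cases hcs : ∃ s₀, 0 < δ 0 s a s₀ ∧ 0 < δ 1 s a s₀ ∧ δ 0 s a s₀ ≠ δ 1 s a s₀
    · obtain ⟨s₀, hp0, hp1, hne₀⟩ := hcs
      intro heq
      have : δp δ 0 (Sum.inl s) (Sum.inl a) (Sum.inl s₀)
          = δp δ 1 (Sum.inl s) (Sum.inl a) (Sum.inl s₀) := congrFun heq (Sum.inl s₀)
      rw [δp_lll, δp_lll, if_neg hnr, if_neg hnr, if_pos hinf', if_pos hinf',
        fin2_sub_zero, fin2_sub_one, if_pos hp1, if_pos hp0] at this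
      exact hne₀ this
    · -- rows agree on the common support, so some ⊥-mass differs
      obtain ⟨s₀, hne₀⟩ := Function.ne_iff.mp hne
      have hone : 0 < δ 0 s a s₀ ∨ 0 < δ 1 s a s₀ := by
        rcases lt_or_eq_of_le (hδ0 0 s a s₀) with h | h
        · exact Or.inl h
        rcases lt_or_eq_of_le (hδ0 1 s a s₀) with h' | h'
        · exact Or.inr h'
        exact absurd (h.symm.trans h'.symm.symm) hne₀
      rcases hone with hp | hp
      · have hnp : ¬ 0 < δ 1 s a s₀ := by
          intro hp1
          exact hcs ⟨s₀, hp, hp1, hne₀⟩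
        intro heq
        have : δp δ 0 (Sum.inl s) (Sum.inl a) (Sum.inr 0)
            = δp δ 1 (Sum.inl s) (Sum.inl a) (Sum.inr 0) := congrFun heq (Sum.inr 0)
        rw [δp_llr, δp_llr, if_neg hnr, if_neg hnr, if_pos hinf', if_pos hinf',
          fin2_sub_zero, fin2_sub_one,
          if_pos (rfl : (0 : Fin 2) = 0), if_neg (by decide : ¬ (0 : Fin 2) = 1)] at this
        have hpos : 0 < ∑ s'' ∈ Finset.univ.filter (fun s'' : S => ¬ 0 < δ 1 s a s''),
            δ 0 s a s'' := by
          refine Finset.sum_pos' (fun x _ => hδ0 0 s a x) ⟨s₀, ?_, hp⟩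
          simp only [Finset.mem_filter, Finset.mem_univ, true_and]
          exact hnp
        rw [this] at hpos
        exact lt_irrefl 0 hpos
      · have hnp : ¬ 0 < δ 0 s a s₀ := by
          intro hp0
          exact hcs ⟨s₀, hp0, hp, hne₀⟩
        intro heq
        have : δp δ 0 (Sum.inl s) (Sum.inl a) (Sum.inr 1)
            = δp δ 1 (Sum.inl s) (Sum.inl a) (Sum.inr 1) := congrFun heq (Sum.inr 1)
        rw [δp_llr, δp_llr, if_neg hnr, if_neg hnr, if_pos hinf', if_pos hinf',
          fin2_sub_zero, fin2_sub_one,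
          if_neg (by decide : ¬ (1 : Fin 2) = 0), if_pos (rfl : (1 : Fin 2) = 1)] at this
        have hpos : 0 < ∑ s'' ∈ Finset.univ.filter (fun s'' : S => ¬ 0 < δ 0 s a s''),
            δ 1 s a s'' := by
          refine Finset.sum_pos' (fun x _ => hδ0 1 s a x) ⟨s₀, ?_, hp⟩
          simp only [Finset.mem_filter, Finset.mem_univ, true_and]
          exact hnp
        rw [← this] at hpos
        exact lt_irrefl 0 hpos
  · -- common support
    refine ⟨Sum.inl s', ?_, ?_⟩
    · show 0 < δp δ 0 (Sum.inl s) (Sum.inl a) (Sum.inl s')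
      rw [δp_lll, if_neg hnr, if_pos hinf', fin2_sub_zero, if_pos h1]
      exact h0
    · show 0 < δp δ 1 (Sum.inl s) (Sum.inl a) (Sum.inl s')
      rw [δp_lll, if_neg hnr, if_pos hinf', fin2_sub_one, if_pos h0]
      exact h1

lemma pointwise_noninf {γ : ℝ} (hγ0 : 0 < γ) (hγ1 : γ < 1)
    (hδ0 : ∀ i s a s', 0 ≤ δ i s a s')
    {sp : S ⊕ Fin 2} {ap : A ⊕ Fin 2}
    (hni : ¬ InformativePair (fun i => δp δ i) sp ap) (s' : S ⊕ Fin 2) :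
    Real.sqrt (δp δ 0 sp ap s' * δp δ 1 sp ap s')
      ≤ γ * δp δ 0 sp ap s' + (1 - γ) * δp δ 1 sp ap s' := by
  have hn0 := δp_nonneg δ hδ0 0 sp ap s'
  have hn1 := δp_nonneg δ hδ0 1 sp ap s'
  unfold InformativePair at hni
  push_neg at hni
  by_cases heq : δp δ 0 sp ap = δp δ 1 sp ap
  · rw [← congrFun heq s', Real.sqrt_mul_self hn0]
    nlinarith [congrFun heq s']
  · have hdisj := hni heq s'
    have hzero : δp δ 0 sp ap s' * δp δ 1 sp ap s' = 0 := by
      by_contra hz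
      have h0 : 0 < δp δ 0 sp ap s' := lt_of_le_of_ne hn0 (by
        intro h; exact hz (by rw [← h, zero_mul]))
      have h1 : 0 < δp δ 1 sp ap s' := lt_of_le_of_ne hn1 (by
        intro h; exact hz (by rw [← h, mul_zero]))
      exact absurd h1 (not_lt.mpr (hdisj h0))
    rw [hzero, Real.sqrt_zero]
    nlinarith

end Bounds

section CBound
open scoped Classical

variable {S A : Type} [Fintype S] [Fintype A] [DecidableEq S] [DecidableEq A]

/-- Available informative state-action pairs of the preprocessed MMDP. -/
noncomputable def IPset (act : S → Finset A) (δ : Fin 2 → S → A → S → ℝ) (ra : S → A) :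
    Finset ((S ⊕ Fin 2) × (A ⊕ Fin 2)) :=
  Finset.univ.filter fun p =>
    p.2 ∈ actp act δ ra p.1 ∧ InformativePair (fun i => δp δ i) p.1 p.2

/-- The Bhattacharyya coefficient of one transition. -/
noncomputable def sqSum (δ : Fin 2 → S → A → S → ℝ)
    (p : (S ⊕ Fin 2) × (A ⊕ Fin 2)) : ℝ :=
  ∑ s' : S ⊕ Fin 2, Real.sqrt (δp δ 0 p.1 p.2 s' * δp δ 1 p.1 p.2 s')

/-- The contraction constant `c < 1`. -/
noncomputable def cbd (act : S → Finset A) (δ : Fin 2 → S → A → S → ℝ) (ra : S → A) : ℝ :=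
  (insert (1/2 : ℝ) ((IPset act δ ra).image (sqSum δ))).max'
    (Finset.insert_nonempty _ _)

variable (act : S → Finset A) (δ : Fin 2 → S → A → S → ℝ) (ra : S → A)

lemma half_le_cbd : (1/2 : ℝ) ≤ cbd act δ ra :=
  Finset.le_max' _ _ (Finset.mem_insert_self _ _)

lemma cbd_pos : 0 < cbd act δ ra := lt_of_lt_of_le (by norm_num) (half_le_cbd act δ ra)

lemma sqSum_le_one (hδ0 : ∀ i s a s', 0 ≤ δ i s a s')
    (hδ1 : ∀ i s, ∀ a ∈ act s, ∑ s', δ i s a s' = 1)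
    (hra : ∀ s, RevealingState act δ s → ra s ∈ act s ∧ RevealingPair δ s (ra s))
    {sp : S ⊕ Fin 2} {ap : A ⊕ Fin 2} (hap : ap ∈ actp act δ ra sp) :
    sqSum δ (sp, ap) ≤ 1 := by
  unfold sqSum
  calc ∑ s' : S ⊕ Fin 2, Real.sqrt (δp δ 0 sp ap s' * δp δ 1 sp ap s')
      ≤ ∑ s' : S ⊕ Fin 2, (δp δ 0 sp ap s' + δp δ 1 sp ap s') / 2 :=
        Finset.sum_le_sum fun s' _ =>
          sqrt_mul_le_half_add (δp_nonneg δ hδ0 0 sp ap s') (δp_nonneg δ hδ0 1 sp ap s')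
    _ = 1 := by
        rw [← Finset.sum_div, Finset.sum_add_distrib,
          δp_sum_one act δ ra hδ0 hδ1 hra 0 sp ap hap,
          δp_sum_one act δ ra hδ0 hδ1 hra 1 sp ap hap]
        norm_num

lemma sqSum_lt_one (hδ0 : ∀ i s a s', 0 ≤ δ i s a s')
    (hδ1 : ∀ i s, ∀ a ∈ act s, ∑ s', δ i s a s' = 1)
    (hra : ∀ s, RevealingState act δ s → ra s ∈ act s ∧ RevealingPair δ s (ra s))
    {sp : S ⊕ Fin 2} {ap : A ⊕ Fin 2} (hap : ap ∈ actp act δ ra sp)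
    (hinf : InformativePair (fun i => δp δ i) sp ap) :
    sqSum δ (sp, ap) < 1 := by
  obtain ⟨s₀, hne₀⟩ := Function.ne_iff.mp hinf.1
  unfold sqSum
  calc ∑ s' : S ⊕ Fin 2, Real.sqrt (δp δ 0 sp ap s' * δp δ 1 sp ap s')
      < ∑ s' : S ⊕ Fin 2, (δp δ 0 sp ap s' + δp δ 1 sp ap s') / 2 := by
        refine Finset.sum_lt_sum (fun s' _ =>
          sqrt_mul_le_half_add (δp_nonneg δ hδ0 0 sp ap s') (δp_nonneg δ hδ0 1 sp ap s'))
          ⟨s₀, Finset.mem_univ s₀, ?_⟩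
        exact sqrt_mul_lt_half_add (δp_nonneg δ hδ0 0 sp ap s₀)
          (δp_nonneg δ hδ0 1 sp ap s₀) hne₀
    _ = 1 := by
        rw [← Finset.sum_div, Finset.sum_add_distrib,
          δp_sum_one act δ ra hδ0 hδ1 hra 0 sp ap hap,
          δp_sum_one act δ ra hδ0 hδ1 hra 1 sp ap hap]
        norm_num

lemma cbd_lt_one (hδ0 : ∀ i s a s', 0 ≤ δ i s a s')
    (hδ1 : ∀ i s, ∀ a ∈ act s, ∑ s', δ i s a s' = 1)
    (hra : ∀ s, RevealingState act δ s → ra s ∈ act s ∧ RevealingPair δ s (ra s)) :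
    cbd act δ ra < 1 := by
  rw [cbd, Finset.max'_lt_iff]
  intro y hy
  rcases Finset.mem_insert.mp hy with rfl | hy
  · norm_num
  · obtain ⟨p, hp, rfl⟩ := Finset.mem_image.mp hy
    rw [IPset, Finset.mem_filter] at hp
    obtain ⟨s1, s2⟩ := p
    exact sqSum_lt_one act δ ra hδ0 hδ1 hra hp.2.1 hp.2.2

lemma sqSum_le_cbd {sp : S ⊕ Fin 2} {ap : A ⊕ Fin 2} (hap : ap ∈ actp act δ ra sp)
    (hinf : InformativePair (fun i => δp δ i) sp ap) :
    sqSum δ (sp, ap) ≤ cbd act δ ra := by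
  refine Finset.le_max' _ _ (Finset.mem_insert_of_mem (Finset.mem_image_of_mem _ ?_))
  rw [IPset, Finset.mem_filter]
  exact ⟨Finset.mem_univ _, hap, hinf⟩

end CBound

section NuBounds
open scoped Classical

variable {S A : Type} [Fintype S] [Fintype A] [DecidableEq S] [DecidableEq A]

/-- Geometric-mean kernel of the two preprocessed kernels. -/
noncomputable def sqKer (δ : Fin 2 → S → A → S → ℝ) :
    (S ⊕ Fin 2) → (A ⊕ Fin 2) → (S ⊕ Fin 2) → ℝ :=
  fun sp ap s' => Real.sqrt (δp δ 0 sp ap s' * δp δ 1 sp ap s')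

/-- Mixture kernel (the informative MDP). -/
noncomputable def dIKer (δ : Fin 2 → S → A → S → ℝ) (γ : ℝ) :
    (S ⊕ Fin 2) → (A ⊕ Fin 2) → (S ⊕ Fin 2) → ℝ :=
  fun sp ap s' => γ * δp δ 0 sp ap s' + (1 - γ) * δp δ 1 sp ap s'

/-- The informative pairs predicate (informative part of `ISAp`). -/
def Ppred (act : S → Finset A) (δ : Fin 2 → S → A → S → ℝ) (ra : S → A) :
    (S ⊕ Fin 2) × (A ⊕ Fin 2) → Prop :=
  fun p => p.2 ∈ actp act δ ra p.1 ∧ InformativePair (fun i => δp δ i) p.1 p.2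

lemma sqKer_nonneg (δ : Fin 2 → S → A → S → ℝ) (sp ap s') :
    0 ≤ sqKer δ sp ap s' := Real.sqrt_nonneg _

lemma dIKer_nonneg (δ : Fin 2 → S → A → S → ℝ) {γ : ℝ} (hγ0 : 0 < γ) (hγ1 : γ < 1)
    (hδ0 : ∀ i s a s', 0 ≤ δ i s a s') (sp ap s') : 0 ≤ dIKer δ γ sp ap s' :=
  add_nonneg (mul_nonneg hγ0.le (δp_nonneg δ hδ0 0 sp ap s'))
    (mul_nonneg (by linarith) (δp_nonneg δ hδ0 1 sp ap s'))

lemma histProb_nonneg {S' A' : Type} [Fintype S'] [Fintype A'] [DecidableEq S']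
    (init : S') (d : S' → A' → S' → ℝ) (hd : ∀ s a s', 0 ≤ d s a s')
    (πf : (t : ℕ) → Hist S' A' t → A' → ℝ) (hπ : ∀ t h a, 0 ≤ πf t h a)
    (t : ℕ) (h : Hist S' A' t) : 0 ≤ histProb init d πf t h := by
  unfold histProb
  exact mul_nonneg (by split_ifs <;> norm_num)
    (Finset.prod_nonneg fun τ _ => mul_nonneg (hπ _ _ _) (hd _ _ _))

/-- Number of steps of `h` whose state-action pair satisfies `P`. -/
noncomputable def cnt {S' A' : Type} (P : S' × A' → Prop) {t : ℕ}
    (h : Hist S' A' t) : ℕ :=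
  ∑ τ : Fin t, if P (h.1 τ.castSucc, h.2 τ) then 1 else 0

lemma cnt_zero {S' A' : Type} (P : S' × A' → Prop) (h : Hist S' A' 0) :
    cnt P h = 0 := by
  unfold cnt
  simp

lemma cnt_hSnoc {S' A' : Type} (P : S' × A' → Prop) {t : ℕ} (h : Hist S' A' t)
    (a : A') (s : S') :
    cnt P (hSnoc h a s) = cnt P h + (if P (lastState h, a) then 1 else 0) := by
  unfold cnt
  rw [Fin.sum_univ_castSucc]
  congr 1
  · refine Finset.sum_congr rfl fun τ _ => ?_
    have h2 : (hSnoc h a s).2 τ.castSucc = h.2 τ := snoc_app_castSucc h.2 a τ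
    have h3 : (hSnoc h a s).1 (τ.castSucc).castSucc = h.1 τ.castSucc :=
      snoc_app_castSucc h.1 s τ.castSucc
    rw [h2, h3]
  · have h2 : (hSnoc h a s).2 (Fin.last t) = a := snoc_app_last h.2 a
    have h3 : (hSnoc h a s).1 (Fin.last t).castSucc = lastState h :=
      snoc_app_castSucc h.1 s (Fin.last t)
    rw [h2, h3]

lemma sqrt_histProb_eq (δ : Fin 2 → S → A → S → ℝ)
    (hδ0 : ∀ i s a s', 0 ≤ δ i s a s') (init : S ⊕ Fin 2)
    (πf : (t : ℕ) → Hist (S ⊕ Fin 2) (A ⊕ Fin 2) t → (A ⊕ Fin 2) → ℝ)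
    (hπ : ∀ t h a, 0 ≤ πf t h a) :
    ∀ (t : ℕ) (h : Hist (S ⊕ Fin 2) (A ⊕ Fin 2) t),
      Real.sqrt (histProb init (δp δ 0) πf t h * histProb init (δp δ 1) πf t h)
        = histProb init (sqKer δ) πf t h := by
  intro t
  induction t with
  | zero =>
      intro h
      rw [histProb_zero, histProb_zero, histProb_zero]
      split_ifs
      · rw [mul_one, Real.sqrt_one]
      · rw [mul_zero, Real.sqrt_zero]
  | succ t IH =>
      intro h
      obtain ⟨h, a, s, rfl⟩ : ∃ h₀ a s, hSnoc h₀ a s = h :=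
        ⟨hTrunc h, h.2 (Fin.last t), h.1 (Fin.last (t + 1)), hSnoc_hTrunc h⟩
      rw [histProb_hSnoc, histProb_hSnoc, histProb_hSnoc]
      have hP0 := histProb_nonneg init (δp δ 0) (δp_nonneg δ hδ0 0) πf hπ t h
      have hP1 := histProb_nonneg init (δp δ 1) (δp_nonneg δ hδ0 1) πf hπ t h
      have e : (histProb init (δp δ 0) πf t h * (πf t h a * δp δ 0 (lastState h) a s)) *
          (histProb init (δp δ 1) πf t h * (πf t h a * δp δ 1 (lastState h) a s))
        = (histProb init (δp δ 0) πf t h * histProb init (δp δ 1) πf t h) *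
          ((πf t h a * πf t h a) *
            (δp δ 0 (lastState h) a s * δp δ 1 (lastState h) a s)) := by ring
      rw [e, Real.sqrt_mul (mul_nonneg hP0 hP1),
        Real.sqrt_mul (mul_nonneg (hπ t h a) (hπ t h a)),
        Real.sqrt_mul_self (hπ t h a), IH h]
      show _ = histProb init (sqKer δ) πf t h * (πf t h a * sqKer δ (lastState h) a s)
      unfold sqKer
      ring

variable (act : S → Finset A) (δ : Fin 2 → S → A → S → ℝ) (ra : S → A)

lemma nu_le_M (hδ0 : ∀ i s a s', 0 ≤ δ i s a s') {γ : ℝ} (hγ0 : 0 < γ) (hγ1 : γ < 1)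
    (init : S ⊕ Fin 2)
    (πf : (t : ℕ) → Hist (S ⊕ Fin 2) (A ⊕ Fin 2) t → (A ⊕ Fin 2) → ℝ)
    (hπ : ∀ t h a, 0 ≤ πf t h a)
    (hπz : ∀ t h a, a ∉ actp act δ ra (lastState h) → πf t h a = 0) :
    ∀ (t : ℕ) (h : Hist (S ⊕ Fin 2) (A ⊕ Fin 2) t),
      histProb init (sqKer δ) πf t h
        ≤ (1 / (2 * Real.sqrt (γ * (1 - γ)))) ^ (cnt (Ppred act δ ra) h)
          * histProb init (dIKer δ γ) πf t h := by
  set M := 1 / (2 * Real.sqrt (γ * (1 - γ))) with hM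
  have hM1 : 1 ≤ M := one_le_M hγ0 hγ1
  have hM0 : 0 ≤ M := by linarith
  intro t
  induction t with
  | zero =>
      intro h
      rw [histProb_zero, histProb_zero, cnt_zero, pow_zero, one_mul]
  | succ t IH =>
      intro h
      obtain ⟨h, a, s, rfl⟩ : ∃ h₀ a s, hSnoc h₀ a s = h :=
        ⟨hTrunc h, h.2 (Fin.last t), h.1 (Fin.last (t + 1)), hSnoc_hTrunc h⟩
      rw [histProb_hSnoc, histProb_hSnoc, cnt_hSnoc]
      have hν := histProb_nonneg init (sqKer δ) (sqKer_nonneg δ) πf hπ t h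
      have hQ := histProb_nonneg init (dIKer δ γ)
        (dIKer_nonneg δ hγ0 hγ1 hδ0) πf hπ t h
      have hQn : 0 ≤ (M : ℝ) ^ (cnt (Ppred act δ ra) h)
          * histProb init (dIKer δ γ) πf t h := mul_nonneg (pow_nonneg hM0 _) hQ
      by_cases hp : πf t h a = 0
      · rw [hp, zero_mul, mul_zero]
        refine mul_nonneg (pow_nonneg hM0 _) (mul_nonneg hQ ?_)
        exact le_of_eq (zero_mul _).symm
      · have hav : a ∈ actp act δ ra (lastState h) := by
          by_contra hx
          exact hp (hπz t h a hx)
        by_cases hPP : Ppred act δ ra (lastState h, a)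
        · rw [if_pos hPP]
          have hker : sqKer δ (lastState h) a s ≤ M * dIKer δ γ (lastState h) a s :=
            sqrt_mul_le_M hγ0 hγ1 (δp_nonneg δ hδ0 0 _ _ _) (δp_nonneg δ hδ0 1 _ _ _)
          calc histProb init (sqKer δ) πf t h * (πf t h a * sqKer δ (lastState h) a s)
              ≤ (M ^ (cnt (Ppred act δ ra) h) * histProb init (dIKer δ γ) πf t h) *
                (πf t h a * (M * dIKer δ γ (lastState h) a s)) := by
                refine mul_le_mul (IH h) (mul_le_mul_of_nonneg_left hker (hπ t h a)) ?_ hQn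
                exact mul_nonneg (hπ t h a) (sqKer_nonneg δ _ _ _)
            _ = M ^ (cnt (Ppred act δ ra) h + 1) *
                (histProb init (dIKer δ γ) πf t h *
                  (πf t h a * dIKer δ γ (lastState h) a s)) := by
                rw [pow_succ]
                ring
        · rw [if_neg hPP, add_zero]
          have hni : ¬ InformativePair (fun i => δp δ i) (lastState h) a :=
            fun hi => hPP ⟨hav, hi⟩
          have hker : sqKer δ (lastState h) a s ≤ dIKer δ γ (lastState h) a s :=
            pointwise_noninf δ hγ0 hγ1 hδ0 hni s
          calc histProb init (sqKer δ) πf t h * (πf t h a * sqKer δ (lastState h) a s)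
              ≤ (M ^ (cnt (Ppred act δ ra) h) * histProb init (dIKer δ γ) πf t h) *
                (πf t h a * dIKer δ γ (lastState h) a s) := by
                refine mul_le_mul (IH h) (mul_le_mul_of_nonneg_left hker (hπ t h a)) ?_ hQn
                exact mul_nonneg (hπ t h a) (sqKer_nonneg δ _ _ _)
            _ = M ^ (cnt (Ppred act δ ra) h) *
                (histProb init (dIKer δ γ) πf t h *
                  (πf t h a * dIKer δ γ (lastState h) a s)) := by ring

lemma sum_nu_le (hδ0 : ∀ i s a s', 0 ≤ δ i s a s')
    (hδ1 : ∀ i s, ∀ a ∈ act s, ∑ s', δ i s a s' = 1)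
    (hra : ∀ s, RevealingState act δ s → ra s ∈ act s ∧ RevealingPair δ s (ra s))
    (init : S ⊕ Fin 2)
    (πf : (t : ℕ) → Hist (S ⊕ Fin 2) (A ⊕ Fin 2) t → (A ⊕ Fin 2) → ℝ)
    (hπ : ∀ t h a, 0 ≤ πf t h a)
    (hπ1 : ∀ t h, ∑ a ∈ actp act δ ra (lastState h), πf t h a = 1)
    (hπz : ∀ t h a, a ∉ actp act δ ra (lastState h) → πf t h a = 0) :
    ∀ (t k : ℕ),
      ∑ h : Hist (S ⊕ Fin 2) (A ⊕ Fin 2) t,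
        histProb init (sqKer δ) πf t h * cbd act δ ra ^ (k - cnt (Ppred act δ ra) h)
      ≤ cbd act δ ra ^ k := by
  set c := cbd act δ ra with hc
  have hc0 : 0 < c := cbd_pos act δ ra
  have hc1 : c < 1 := cbd_lt_one act δ ra hδ0 hδ1 hra
  have hπu : ∀ t (h : Hist (S ⊕ Fin 2) (A ⊕ Fin 2) t),
      ∑ a : A ⊕ Fin 2, πf t h a = 1 := by
    intro t h
    rw [← hπ1 t h]
    exact (Finset.sum_subset (Finset.subset_univ _)
      (fun x _ hx => hπz t h x hx)).symm
  intro t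
  induction t with
  | zero =>
      intro k
      rw [sum_hist_zero]
      have e : ∀ s : S ⊕ Fin 2,
          histProb init (sqKer δ) πf 0 ((fun _ => s, fun i => i.elim0))
            * c ^ (k - cnt (Ppred act δ ra) ((fun _ => s, fun i => i.elim0)))
          = if s = init then c ^ k else 0 := by
        intro s
        rw [histProb_zero, cnt_zero, Nat.sub_zero]
        split_ifs <;> simp
      rw [Finset.sum_congr rfl fun s _ => e s]
      rw [Finset.sum_ite_eq' Finset.univ init fun _ => c ^ k]
      simp
  | succ t IH =>
      intro k
      rw [sum_hist_succ]
      have key : ∀ h : Hist (S ⊕ Fin 2) (A ⊕ Fin 2) t,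
          ∑ a : A ⊕ Fin 2, ∑ s : S ⊕ Fin 2,
            histProb init (sqKer δ) πf (t+1) (hSnoc h a s)
              * c ^ (k - cnt (Ppred act δ ra) (hSnoc h a s))
          ≤ histProb init (sqKer δ) πf t h * c ^ (k - cnt (Ppred act δ ra) h) := by
        intro h
        set n := cnt (Ppred act δ ra) h with hn
        have hν := histProb_nonneg init (sqKer δ) (sqKer_nonneg δ) πf hπ t h
        have inner : ∀ a : A ⊕ Fin 2,
            ∑ s : S ⊕ Fin 2, histProb init (sqKer δ) πf (t+1) (hSnoc h a s)
              * c ^ (k - cnt (Ppred act δ ra) (hSnoc h a s))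
            = (histProb init (sqKer δ) πf t h * πf t h a
                * c ^ (k - (n + if Ppred act δ ra (lastState h, a) then 1 else 0)))
              * sqSum δ (lastState h, a) := by
          intro a
          unfold sqSum
          rw [Finset.mul_sum]
          refine Finset.sum_congr rfl fun s _ => ?_
          rw [histProb_hSnoc, cnt_hSnoc, ← hn]
          show _ = _ * Real.sqrt (δp δ 0 (lastState h) a s * δp δ 1 (lastState h) a s)
          unfold sqKer
          ring
        rw [Finset.sum_congr rfl fun a _ => inner a]
        have bound : ∀ a : A ⊕ Fin 2,
            (histProb init (sqKer δ) πf t h * πf t h a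
              * c ^ (k - (n + if Ppred act δ ra (lastState h, a) then 1 else 0)))
              * sqSum δ (lastState h, a)
            ≤ (histProb init (sqKer δ) πf t h * πf t h a) * c ^ (k - n) := by
          intro a
          by_cases hp : πf t h a = 0
          · rw [hp]
            simp
          · have hav : a ∈ actp act δ ra (lastState h) := by
              by_contra hx
              exact hp (hπz t h a hx)
            have hνπ : 0 ≤ histProb init (sqKer δ) πf t h * πf t h a :=
              mul_nonneg hν (hπ t h a)
            by_cases hPP : Ppred act δ ra (lastState h, a)
            · rw [if_pos hPP]
              have h1 : sqSum δ (lastState h, a) ≤ c := sqSum_le_cbd act δ ra hav hPP.2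
              have h2 : sqSum δ (lastState h, a) * c ^ (k - (n+1)) ≤ c ^ (k - n) := by
                calc sqSum δ (lastState h, a) * c ^ (k - (n+1))
                    ≤ c * c ^ (k - (n+1)) :=
                      mul_le_mul_of_nonneg_right h1 (pow_nonneg hc0.le _)
                  _ = c ^ (k - (n+1) + 1) := by rw [pow_succ]; ring
                  _ ≤ c ^ (k - n) := by
                      refine pow_le_pow_of_le_one hc0.le hc1.le ?_
                      omega
              calc (histProb init (sqKer δ) πf t h * πf t h a * c ^ (k - (n+1)))
                    * sqSum δ (lastState h, a)
                  = (histProb init (sqKer δ) πf t h * πf t h a)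
                    * (sqSum δ (lastState h, a) * c ^ (k - (n+1))) := by ring
                _ ≤ (histProb init (sqKer δ) πf t h * πf t h a) * c ^ (k - n) :=
                    mul_le_mul_of_nonneg_left h2 hνπ
            · rw [if_neg hPP, add_zero]
              have h1 : sqSum δ (lastState h, a) ≤ 1 :=
                sqSum_le_one act δ ra hδ0 hδ1 hra hav
              calc (histProb init (sqKer δ) πf t h * πf t h a * c ^ (k - n))
                    * sqSum δ (lastState h, a)
                  ≤ (histProb init (sqKer δ) πf t h * πf t h a * c ^ (k - n)) * 1 :=
                    mul_le_mul_of_nonneg_left h1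
                      (mul_nonneg hνπ (pow_nonneg hc0.le _))
                _ = (histProb init (sqKer δ) πf t h * πf t h a) * c ^ (k - n) := by ring
        calc ∑ a : A ⊕ Fin 2, _ ≤ ∑ a : A ⊕ Fin 2,
              (histProb init (sqKer δ) πf t h * πf t h a) * c ^ (k - n) :=
              Finset.sum_le_sum fun a _ => bound a
          _ = histProb init (sqKer δ) πf t h * c ^ (k - n) := by
              rw [← Finset.sum_mul]
              rw [← Finset.mul_sum, hπu t h, mul_one]
      calc ∑ h : Hist (S ⊕ Fin 2) (A ⊕ Fin 2) t, ∑ a : A ⊕ Fin 2, ∑ s : S ⊕ Fin 2,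
            histProb init (sqKer δ) πf (t+1) (hSnoc h a s)
              * c ^ (k - cnt (Ppred act δ ra) (hSnoc h a s))
          ≤ ∑ h : Hist (S ⊕ Fin 2) (A ⊕ Fin 2) t,
            histProb init (sqKer δ) πf t h * c ^ (k - cnt (Ppred act δ ra) h) :=
            Finset.sum_le_sum fun h _ => key h
        _ ≤ c ^ k := IH k

end NuBounds

section Meas
open MeasureTheory

variable {S A : Type}

/-- The length-`t` prefix history of an infinite trajectory. -/
def prefT (ω : Traj S A) (t : ℕ) : Hist S A t :=
  (fun i => (ω i.val).1, fun i => (ω i.val).2)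

lemma mem_Cyl_iff {t : ℕ} (h : Hist S A t) (ω : Traj S A) :
    ω ∈ Cyl h ↔ prefT ω t = h := by
  constructor
  · rintro ⟨h1, h2⟩
    exact Prod.ext (funext fun i => h1 i) (funext fun i => h2 i)
  · rintro rfl
    exact ⟨fun i => rfl, fun i => rfl⟩

lemma lastState_prefT (ω : Traj S A) (t : ℕ) :
    lastState (prefT ω t) = (ω t).1 := rfl

lemma prefT_succ (ω : Traj S A) (t : ℕ) :
    prefT ω (t + 1) = hSnoc (prefT ω t) ((ω t).2) ((ω (t + 1)).1) := by
  refine Prod.ext (funext fun i => ?_) (funext fun i => ?_)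
  · refine Fin.lastCases ?_ (fun j => ?_) i
    · exact (snoc_app_last _ _).symm
    · exact (snoc_app_castSucc (fun i : Fin (t+1) => (ω i.val).1) _ j).symm
  · refine Fin.lastCases ?_ (fun j => ?_) i
    · exact (snoc_app_last _ _).symm
    · exact (snoc_app_castSucc (fun i : Fin t => (ω i.val).2) _ j).symm

lemma measurable_coord (n : ℕ) (B : Set (S × A)) :
    MeasurableSet {ω : Traj S A | ω n ∈ B} := by
  have hm : @Measurable (Traj S A) (S × A) _ ⊤ (fun ω => ω n) :=
    @measurable_pi_apply ℕ (fun _ => S × A) (fun _ => ⊤) n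
  exact hm MeasurableSpace.measurableSet_top

lemma measurableSet_Cyl {t : ℕ} (h : Hist S A t) : MeasurableSet (Cyl h) := by
  have e : Cyl h = (⋂ i : Fin (t + 1), {ω : Traj S A | ω i.val ∈ {p | p.1 = h.1 i}})
      ∩ ⋂ i : Fin t, {ω : Traj S A | ω i.val ∈ {p | p.2 = h.2 i}} := by
    ext ω
    simp only [Cyl, Set.mem_setOf_eq, Set.mem_inter_iff, Set.mem_iInter]
  rw [e]
  exact (MeasurableSet.iInter fun (i : Fin (t + 1)) =>
      measurable_coord i.val {p | p.1 = h.1 i}).inter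
    (MeasurableSet.iInter fun (i : Fin t) => measurable_coord i.val {p | p.2 = h.2 i})

lemma pairwiseDisjoint_Cyl {t : ℕ} (F : Finset (Hist S A t)) :
    (↑F : Set (Hist S A t)).PairwiseDisjoint Cyl := by
  intro h _ h' _ hne
  rw [Function.onFun, Set.disjoint_left]
  intro ω hω hω'
  exact hne (((mem_Cyl_iff h ω).mp hω).symm.trans ((mem_Cyl_iff h' ω).mp hω'))

lemma measure_biUnion_Cyl {t : ℕ} (μ : Measure (Traj S A))
    (F : Finset (Hist S A t)) :
    μ (⋃ h ∈ F, Cyl h) = ∑ h ∈ F, μ (Cyl h) :=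
  measure_biUnion_finset (pairwiseDisjoint_Cyl F) fun h _ => measurableSet_Cyl h

lemma infinite_iff_unbounded {P : ℕ → Prop} :
    {n | P n}.Infinite ↔ ∀ N, ∃ n, N ≤ n ∧ P n := by
  constructor
  · intro hI N
    obtain ⟨n, hn, hlt⟩ := hI.exists_gt N
    exact ⟨n, hlt.le, hn⟩
  · intro hub
    intro hFin
    obtain ⟨N, hN⟩ := hFin.bddAbove
    obtain ⟨n, hn, hPn⟩ := hub (N + 1)
    exact absurd (hN hPn) (by omega)

lemma exists_eq_infinite {α : Type} [Fintype α] {g : ℕ → α} {T : Set ℕ}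
    (hT : T.Infinite) : ∃ p : α, {n | n ∈ T ∧ g n = p}.Infinite := by
  by_contra hcon
  push_neg at hcon
  apply hT
  have e : T = ⋃ p ∈ (Finset.univ : Finset α), {n | n ∈ T ∧ g n = p} := by
    ext n
    simp
  rw [e]
  exact Set.Finite.biUnion (Finset.univ : Finset α).finite_toSet fun p _ => hcon p

lemma measurableSet_infOften [Fintype S] [Fintype A] (K : Set (S × A)) :
    MeasurableSet {ω : Traj S A | (InfOften ω ∩ K).Nonempty} := by
  have e : {ω : Traj S A | (InfOften ω ∩ K).Nonempty}
      = ⋃ p : S × A, ⋃ (_ : p ∈ K), ⋂ N : ℕ, ⋃ n : ℕ, ⋃ (_ : N ≤ n),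
          {ω : Traj S A | ω n ∈ ({p} : Set (S × A))} := by
    ext ω
    simp only [Set.mem_setOf_eq, Set.mem_iUnion, Set.mem_iInter, Set.mem_singleton_iff]
    constructor
    · rintro ⟨p, hinf, hK⟩
      exact ⟨p, hK, fun N => (infinite_iff_unbounded.mp hinf N).imp
        fun n hn => ⟨hn.1, hn.2⟩⟩
    · rintro ⟨p, hK, hub⟩
      refine ⟨p, ?_, hK⟩
      exact infinite_iff_unbounded.mpr fun N => (hub N).imp fun n hn => ⟨hn.1, hn.2⟩
  rw [e]
  exact MeasurableSet.iUnion fun p => MeasurableSet.iUnion fun _ =>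
    MeasurableSet.iInter fun N => MeasurableSet.iUnion fun n =>
      MeasurableSet.iUnion fun _ => measurable_coord n _

end Meas

section Suff
open MeasureTheory
open scoped Classical

variable {S A : Type} [Fintype S] [Fintype A] [DecidableEq S] [DecidableEq A]

/-- Histories with few informative steps that avoid the absorbing states. -/
noncomputable def Fset (act : S → Finset A) (δ : Fin 2 → S → A → S → ℝ) (ra : S → A)
    (k t : ℕ) : Finset (Hist (S ⊕ Fin 2) (A ⊕ Fin 2) t) :=
  Finset.univ.filter fun h =>
    cnt (Ppred act δ ra) h < k ∧ ∀ i, ((h.1 i).isLeft : Prop)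

/-- The corresponding union of cylinders. -/
def Uset (act : S → Finset A) (δ : Fin 2 → S → A → S → ℝ) (ra : S → A)
    (k t : ℕ) : Set (Traj (S ⊕ Fin 2) (A ⊕ Fin 2)) :=
  ⋃ h ∈ Fset act δ ra k t, Cyl h

lemma δp_llr_ne (δ : Fin 2 → S → A → S → ℝ) (i j : Fin 2) (hne : j ≠ i)
    (s : S) (a : A) : δp δ i (Sum.inl s) (Sum.inl a) (Sum.inr j) = 0 := by
  rw [δp_llr]
  split_ifs with h1 h2 h3 h4 <;> first
    | rfl
    | exact absurd h2 hne
    | exact absurd h4 hne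

lemma δp_prod_inl_inr (δ : Fin 2 → S → A → S → ℝ) (s : S) (ap : A ⊕ Fin 2)
    (j : Fin 2) :
    δp δ 0 (Sum.inl s) ap (Sum.inr j) * δp δ 1 (Sum.inl s) ap (Sum.inr j) = 0 := by
  rcases ap with a | j'
  · by_cases hj : j = 0
    · subst hj
      rw [δp_llr_ne δ 1 0 (by decide) s a, mul_zero]
    · have hj1 : j = 1 := by
        have h2 := j.isLt
        have h0 : j.val ≠ 0 := fun h => hj (Fin.ext h)
        exact Fin.ext (by omega)
      subst hj1
      rw [δp_llr_ne δ 0 1 (by decide) s a, zero_mul]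
  · rw [δp_inl_inr_act, zero_mul]

lemma nu_zero_of_not_allL (δ : Fin 2 → S → A → S → ℝ) (init : S)
    (πf : (t : ℕ) → Hist (S ⊕ Fin 2) (A ⊕ Fin 2) t → (A ⊕ Fin 2) → ℝ) :
    ∀ (t : ℕ) (h : Hist (S ⊕ Fin 2) (A ⊕ Fin 2) t),
      (¬ ∀ i, ((h.1 i).isLeft : Prop)) →
        histProb (Sum.inl init) (sqKer δ) πf t h = 0 := by
  intro t
  induction t with
  | zero =>
      intro h hni
      rw [histProb_zero, if_neg]
      intro heq
      apply hni
      intro i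
      have hi0 : i = 0 := Fin.ext (by omega)
      rw [hi0, heq]
      rfl
  | succ t IH =>
      intro h hni
      obtain ⟨h, a, s, rfl⟩ : ∃ h₀ a s, hSnoc h₀ a s = h :=
        ⟨hTrunc h, h.2 (Fin.last t), h.1 (Fin.last (t + 1)), hSnoc_hTrunc h⟩
      rw [histProb_hSnoc]
      by_cases hL0 : ∀ i, ((h.1 i).isLeft : Prop)
      · -- the failure must come from the appended state
        obtain ⟨i, hi⟩ := not_forall.mp hni
        have hilast : i = Fin.last (t + 1) := by
          by_contra hne
          have hv : i.val ≠ t + 1 := fun hv => hne (Fin.ext hv)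
          have hlt : i.val < t + 1 := by have := i.isLt; omega
          obtain ⟨j, rfl⟩ : ∃ j : Fin (t + 1), i = j.castSucc :=
            ⟨⟨i.val, hlt⟩, Fin.ext rfl⟩
          exact hi (by rw [show (hSnoc h a s).1 j.castSucc = h.1 j from
            snoc_app_castSucc h.1 s j]; exact hL0 j)
        subst hilast
        have hs : (hSnoc h a s).1 (Fin.last (t + 1)) = s := snoc_app_last h.1 s
        rw [hs] at hi
        obtain ⟨j, rfl⟩ : ∃ j, s = Sum.inr j := by
          rcases s with s | j
          · exact absurd rfl hi
          · exact ⟨j, rfl⟩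
        obtain ⟨s₀, hs₀⟩ : ∃ s₀, lastState h = Sum.inl s₀ := by
          have hthis := hL0 (Fin.last t)
          rcases hll : h.1 (Fin.last t) with s₀ | j'
          · exact ⟨s₀, hll⟩
          · rw [hll] at hthis
            exact absurd hthis (by simp)
        have hz : sqKer δ (lastState h) a (Sum.inr j) = 0 := by
          rw [hs₀]
          unfold sqKer
          rw [δp_prod_inl_inr, Real.sqrt_zero]
        rw [hz, mul_zero, mul_zero]
      · rw [IH h hL0, zero_mul]

lemma BC_le_bound (act : S → Finset A) (δ : Fin 2 → S → A → S → ℝ) (ra : S → A)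
    (hδ0 : ∀ i s a s', 0 ≤ δ i s a s')
    (hδ1 : ∀ i s, ∀ a ∈ act s, ∑ s', δ i s a s' = 1)
    (hra : ∀ s, RevealingState act δ s → ra s ∈ act s ∧ RevealingPair δ s (ra s))
    {γ : ℝ} (hγ0 : 0 < γ) (hγ1 : γ < 1) (init : S)
    (πf : (t : ℕ) → Hist (S ⊕ Fin 2) (A ⊕ Fin 2) t → (A ⊕ Fin 2) → ℝ)
    (hπ : ∀ t h a, 0 ≤ πf t h a)
    (hπ1 : ∀ t h, ∑ a ∈ actp act δ ra (lastState h), πf t h a = 1)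
    (hπz : ∀ t h a, a ∉ actp act δ ra (lastState h) → πf t h a = 0)
    (t k : ℕ) :
    BC (Sum.inl init) (δp δ 0) (δp δ 1) πf t
      ≤ (1 / (2 * Real.sqrt (γ * (1 - γ)))) ^ k *
          (∑ h ∈ Fset act δ ra k t, histProb (Sum.inl init) (dIKer δ γ) πf t h)
        + cbd act δ ra ^ k := by
  set c := cbd act δ ra with hc
  set M := 1 / (2 * Real.sqrt (γ * (1 - γ))) with hMdef
  have hM1 : 1 ≤ M := one_le_M hγ0 hγ1
  have hc0 : 0 < c := cbd_pos act δ ra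
  have hν : ∀ h, 0 ≤ histProb (Sum.inl init) (sqKer δ) πf t h :=
    histProb_nonneg _ _ (sqKer_nonneg δ) πf hπ t
  have hQ : ∀ h, 0 ≤ histProb (Sum.inl init) (dIKer δ γ) πf t h :=
    histProb_nonneg _ _ (dIKer_nonneg δ hγ0 hγ1 hδ0) πf hπ t
  have hBC : BC (Sum.inl init) (δp δ 0) (δp δ 1) πf t
      = ∑ h : Hist (S ⊕ Fin 2) (A ⊕ Fin 2) t,
          histProb (Sum.inl init) (sqKer δ) πf t h :=
    Finset.sum_congr rfl fun h _ =>
      sqrt_histProb_eq δ hδ0 (Sum.inl init) πf hπ t h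
  rw [hBC, ← Finset.sum_filter_add_sum_filter_not Finset.univ
    (fun h => cnt (Ppred act δ ra) h < k ∧ ∀ i, ((h.1 i).isLeft : Prop))]
  refine add_le_add ?_ ?_
  · -- few informative steps, no ⊥ : compare to the mixture measure
    have : ∀ h ∈ Fset act δ ra k t,
        histProb (Sum.inl init) (sqKer δ) πf t h
          ≤ M ^ k * histProb (Sum.inl init) (dIKer δ γ) πf t h := by
      intro h hh
      rw [Fset, Finset.mem_filter] at hh
      calc histProb (Sum.inl init) (sqKer δ) πf t h
          ≤ M ^ cnt (Ppred act δ ra) h * histProb (Sum.inl init) (dIKer δ γ) πf t h :=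
            nu_le_M act δ ra hδ0 hγ0 hγ1 (Sum.inl init) πf hπ hπz t h
        _ ≤ M ^ k * histProb (Sum.inl init) (dIKer δ γ) πf t h := by
            exact mul_le_mul_of_nonneg_right
              (pow_le_pow_right₀ hM1 hh.2.1.le) (hQ h)
    calc ∑ h ∈ Fset act δ ra k t, histProb (Sum.inl init) (sqKer δ) πf t h
        ≤ ∑ h ∈ Fset act δ ra k t,
            M ^ k * histProb (Sum.inl init) (dIKer δ γ) πf t h :=
          Finset.sum_le_sum this
      _ = M ^ k * ∑ h ∈ Fset act δ ra k t,
            histProb (Sum.inl init) (dIKer δ γ) πf t h := by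
          rw [Finset.mul_sum]
  · -- the rest is small
    calc ∑ h ∈ Finset.univ.filter (fun h =>
            ¬(cnt (Ppred act δ ra) h < k ∧ ∀ i, ((h.1 i).isLeft : Prop))),
          histProb (Sum.inl init) (sqKer δ) πf t h
        ≤ ∑ h ∈ Finset.univ.filter (fun h =>
            ¬(cnt (Ppred act δ ra) h < k ∧ ∀ i, ((h.1 i).isLeft : Prop))),
          histProb (Sum.inl init) (sqKer δ) πf t h
            * c ^ (k - cnt (Ppred act δ ra) h) := by
          refine Finset.sum_le_sum fun h hh => ?_
          rw [Finset.mem_filter] at hh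
          by_cases hL : ∀ i, ((h.1 i).isLeft : Prop)
          · have hk : k ≤ cnt (Ppred act δ ra) h := by
              rcases not_and_or.mp hh.2 with hcnt | hLL
              · omega
              · exact absurd hL hLL
            rw [Nat.sub_eq_zero_of_le hk, pow_zero, mul_one]
          · rw [nu_zero_of_not_allL δ init πf t h hL, zero_mul]
      _ ≤ ∑ h : Hist (S ⊕ Fin 2) (A ⊕ Fin 2) t,
          histProb (Sum.inl init) (sqKer δ) πf t h
            * c ^ (k - cnt (Ppred act δ ra) h) := by
          refine Finset.sum_le_sum_of_subset_of_nonneg (Finset.filter_subset _ _)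
            fun h _ _ => mul_nonneg (hν h) (pow_nonneg hc0.le _)
      _ ≤ c ^ k := sum_nu_le act δ ra hδ0 hδ1 hra (Sum.inl init) πf hπ hπ1 hπz t k

end Suff

section SuffDir
open MeasureTheory Filter
open scoped Classical

variable {S A : Type} [Fintype S] [Fintype A] [DecidableEq S] [DecidableEq A]

lemma Uset_antitone (act : S → Finset A) (δ : Fin 2 → S → A → S → ℝ) (ra : S → A)
    (k : ℕ) : Antitone (fun t => Uset act δ ra k t) := by
  refine antitone_nat_of_succ_le fun t => ?_
  intro ω hω
  rw [Uset] at hω ⊢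
  simp only [Set.mem_iUnion] at hω ⊢
  obtain ⟨h, hmem, hc⟩ := hω
  have hpref : prefT ω (t + 1) = h := (mem_Cyl_iff h ω).mp hc
  refine ⟨hTrunc h, ?_, ?_⟩
  · rw [Fset, Finset.mem_filter] at hmem ⊢
    obtain ⟨-, hcnt, hL⟩ := hmem
    refine ⟨Finset.mem_univ _, ?_, fun i => ?_⟩
    · have he : cnt (Ppred act δ ra) h
          = cnt (Ppred act δ ra) (hTrunc h)
            + (if Ppred act δ ra (lastState (hTrunc h), h.2 (Fin.last t))
                then 1 else 0) := by
        conv_lhs => rw [← hSnoc_hTrunc h]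
        rw [cnt_hSnoc]
      have : cnt (Ppred act δ ra) (hTrunc h) ≤ cnt (Ppred act δ ra) h := by
        rw [he]
        exact Nat.le_add_right _ _
      omega
    · exact hL i.castSucc
  · rw [mem_Cyl_iff, ← hpref]
    rfl

lemma iInter_Uset_subset (act : S → Finset A) (δ : Fin 2 → S → A → S → ℝ)
    (ra : S → A) (k : ℕ) :
    (⋂ t, Uset act δ ra k t)
      ⊆ {ω : Traj (S ⊕ Fin 2) (A ⊕ Fin 2) |
          ¬ (InfOften ω ∩ ISAp act δ ra).Nonempty} := by
  intro ω hω
  have hbase : ∀ t, cnt (Ppred act δ ra) (prefT ω t) < k ∧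
      ∀ i, (((prefT ω t).1 i).isLeft : Prop) := by
    intro t
    have hmem := Set.mem_iInter.mp hω t
    rw [Uset] at hmem
    simp only [Set.mem_iUnion] at hmem
    obtain ⟨h, hmem, hc⟩ := hmem
    have hpref : prefT ω t = h := (mem_Cyl_iff h ω).mp hc
    rw [Fset, Finset.mem_filter] at hmem
    rw [hpref]
    exact ⟨hmem.2.1, hmem.2.2⟩
  rintro ⟨p, hpinf, hpisa⟩
  rcases hpisa with hp | hp
  · -- informative available pair occurring infinitely often
    have hP : Ppred act δ ra p := hp
    obtain ⟨F₀, hsub, hcard⟩ := hpinf.exists_subset_card_eq k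
    set t := F₀.sup id + 1 with ht
    have hlt : ∀ n ∈ F₀, n < t :=
      fun n hn => lt_of_le_of_lt (Finset.le_sup (f := id) hn) (by omega)
    have hcnt : k ≤ cnt (Ppred act δ ra) (prefT ω t) := by
      have hcard' : cnt (Ppred act δ ra) (prefT ω t)
          = (Finset.univ.filter fun τ : Fin t =>
              Ppred act δ ra (ω τ.val)).card := by
        rw [Finset.card_filter]
        rfl
      rw [hcard', ← hcard]
      refine Finset.card_le_card_of_injOn
        (fun n => (⟨n % t, Nat.mod_lt n (by omega)⟩ : Fin t)) ?_ ?_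
      · intro n hn
        have hnt : n < t := hlt n hn
        have hmod : n % t = n := Nat.mod_eq_of_lt hnt
        have hωn : ω n = p := hsub hn
        rw [Finset.mem_coe, Finset.mem_filter]
        refine ⟨Finset.mem_univ _, ?_⟩
        show Ppred act δ ra (ω ((⟨n % t, _⟩ : Fin t) : Fin t).val)
        simp only [hmod]
        rw [hωn]
        exact hP
      · intro n₁ hn₁ n₂ hn₂ heq
        have h1 : n₁ % t = n₁ := Nat.mod_eq_of_lt (hlt n₁ hn₁)
        have h2 : n₂ % t = n₂ := Nat.mod_eq_of_lt (hlt n₂ hn₂)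
        have := congrArg Fin.val heq
        simp only [h1, h2] at this
        exact this
    exact absurd hcnt (not_le.mpr (hbase t).1)
  · -- absorbing pair occurring infinitely often
    obtain ⟨j, rfl⟩ := hp
    obtain ⟨n, hn⟩ := hpinf.nonempty
    have hL : (((ω n).1).isLeft : Prop) := (hbase (n + 1)).2 ⟨n, by omega⟩
    have h1 : (ω n).1 = Sum.inr j := by
      rw [hn]
    rw [h1] at hL
    exact absurd hL (by simp)

lemma suff_dir (act : S → Finset A) (δ : Fin 2 → S → A → S → ℝ) (ra : S → A)
    (hδ0 : ∀ i s a s', 0 ≤ δ i s a s')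
    (hδ1 : ∀ i s, ∀ a ∈ act s, ∑ s', δ i s a s' = 1)
    (hra : ∀ s, RevealingState act δ s → ra s ∈ act s ∧ RevealingPair δ s (ra s))
    {γ : ℝ} (hγ0 : 0 < γ) (hγ1 : γ < 1) (init : S)
    (πf : (t : ℕ) → Hist (S ⊕ Fin 2) (A ⊕ Fin 2) t → (A ⊕ Fin 2) → ℝ)
    (hπ : ∀ t h a, 0 ≤ πf t h a)
    (hπ1 : ∀ t h, ∑ a ∈ actp act δ ra (lastState h), πf t h a = 1)
    (hπz : ∀ t h a, a ∉ actp act δ ra (lastState h) → πf t h a = 0)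
    (PI : Measure (Traj (S ⊕ Fin 2) (A ⊕ Fin 2)))
    (hprob : IsProbabilityMeasure PI)
    (hcyl : ∀ (t : ℕ) (h : Hist (S ⊕ Fin 2) (A ⊕ Fin 2) t),
      PI (Cyl h) = ENNReal.ofReal (histProb (Sum.inl init) (dIKer δ γ) πf t h))
    (hev : PI {ω | (InfOften ω ∩ ISAp act δ ra).Nonempty} = 1) :
    Tendsto (fun t => BC (Sum.inl init) (δp δ 0) (δp δ 1) πf t) atTop (nhds 0) := by
  set c := cbd act δ ra with hcdef
  set M := 1 / (2 * Real.sqrt (γ * (1 - γ))) with hMdef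
  have hc0 : 0 < c := cbd_pos act δ ra
  have hc1 : c < 1 := cbd_lt_one act δ ra hδ0 hδ1 hra
  have hM1 : 1 ≤ M := one_le_M hγ0 hγ1
  have hQ : ∀ t h, 0 ≤ histProb (Sum.inl init) (dIKer δ γ) πf t h :=
    histProb_nonneg _ _ (dIKer_nonneg δ hγ0 hγ1 hδ0) πf hπ
  have hcompl : PI {ω | (InfOften ω ∩ ISAp act δ ra).Nonempty}ᶜ = 0 := by
    rw [measure_compl (measurableSet_infOften _) (measure_ne_top _ _), measure_univ,
      hev, tsub_self]
  -- key limit for every k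
  have hUlim : ∀ k, Tendsto (fun t => (PI (Uset act δ ra k t)).toReal) atTop (nhds 0) := by
    intro k
    have hUmeas : ∀ t, MeasurableSet (Uset act δ ra k t) := fun t =>
      Finset.measurableSet_biUnion _ fun h _ => measurableSet_Cyl h
    have hzero : PI (⋂ t, Uset act δ ra k t) = 0 :=
      le_antisymm (le_trans (measure_mono (iInter_Uset_subset act δ ra k))
        (le_of_eq hcompl)) zero_le
    have hlim : Tendsto (fun t => PI (Uset act δ ra k t)) atTop (nhds 0) := by
      have := MeasureTheory.tendsto_measure_iInter_atTop
        (μ := PI) (s := fun t => Uset act δ ra k t)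
        (fun t => (hUmeas t).nullMeasurableSet) (Uset_antitone act δ ra k)
        ⟨0, measure_ne_top PI _⟩
      rw [hzero] at this
      exact this
    have := (ENNReal.tendsto_toReal (a := 0) (by simp)).comp hlim
    exact this
  have hQsum : ∀ k t, ∑ h ∈ Fset act δ ra k t,
      histProb (Sum.inl init) (dIKer δ γ) πf t h
      = (PI (Uset act δ ra k t)).toReal := by
    intro k t
    rw [Uset, measure_biUnion_Cyl]
    have e : ∀ h ∈ Fset act δ ra k t, PI (Cyl h)
        = ENNReal.ofReal (histProb (Sum.inl init) (dIKer δ γ) πf t h) :=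
      fun h _ => hcyl t h
    rw [Finset.sum_congr rfl e, ← ENNReal.ofReal_sum_of_nonneg (fun h _ => hQ t h),
      ENNReal.toReal_ofReal (Finset.sum_nonneg fun h _ => hQ t h)]
  have hBCnn : ∀ t, 0 ≤ BC (Sum.inl init) (δp δ 0) (δp δ 1) πf t := by
    intro t
    exact Finset.sum_nonneg fun h _ => Real.sqrt_nonneg _
  rw [Metric.tendsto_atTop]
  intro ε hε
  obtain ⟨k, hk⟩ : ∃ k, c ^ k < ε / 2 :=
    ((tendsto_pow_atTop_nhds_zero_of_lt_one hc0.le hc1).eventually_lt_const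
      (by positivity)).exists
  have hmul : Tendsto (fun t => M ^ k * (PI (Uset act δ ra k t)).toReal) atTop
      (nhds 0) := by
    have := (hUlim k).const_mul (M ^ k)
    simpa using this
  obtain ⟨N, hN⟩ := eventually_atTop.mp (hmul.eventually_lt_const
    (show (0:ℝ) < ε / 2 by positivity))
  refine ⟨N, fun t hT => ?_⟩
  rw [Real.dist_eq, sub_zero, abs_of_nonneg (hBCnn t)]
  calc BC (Sum.inl init) (δp δ 0) (δp δ 1) πf t
      ≤ M ^ k * (∑ h ∈ Fset act δ ra k t,
          histProb (Sum.inl init) (dIKer δ γ) πf t h) + c ^ k :=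
        BC_le_bound act δ ra hδ0 hδ1 hra hγ0 hγ1 init πf hπ hπ1 hπz t k
    _ = M ^ k * (PI (Uset act δ ra k t)).toReal + c ^ k := by rw [hQsum]
    _ < ε / 2 + ε / 2 := add_lt_add (hN t hT) hk
    _ = ε := by ring

end SuffDir

section NecHelpers
open MeasureTheory Filter
open scoped Classical

variable {S A : Type} [Fintype S] [Fintype A] [DecidableEq S] [DecidableEq A]

/-- "Equal-rows" available pairs: both preprocessed kernels agree. -/
def GoodP (act : S → Finset A) (δ : Fin 2 → S → A → S → ℝ) (ra : S → A)
    (p : (S ⊕ Fin 2) × (A ⊕ Fin 2)) : Prop :=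
  p.2 ∈ actp act δ ra p.1 ∧ δp δ 0 p.1 p.2 = δp δ 1 p.1 p.2

/-- Trajectories that eventually only use equal-rows pairs and never visit `⊥`. -/
def ESet (act : S → Finset A) (δ : Fin 2 → S → A → S → ℝ) (ra : S → A) (T : ℕ) :
    Set (Traj (S ⊕ Fin 2) (A ⊕ Fin 2)) :=
  {ω | ∀ n, T ≤ n → GoodP act δ ra (ω n)} ∩ {ω | ∀ n, (((ω n).1).isLeft : Prop)}

lemma measurableSet_ESet (act : S → Finset A) (δ : Fin 2 → S → A → S → ℝ)
    (ra : S → A) (T : ℕ) : MeasurableSet (ESet act δ ra T) := by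
  have e1 : {ω : Traj (S ⊕ Fin 2) (A ⊕ Fin 2) | ∀ n, T ≤ n → GoodP act δ ra (ω n)}
      = ⋂ n, ⋂ (_ : T ≤ n), {ω | ω n ∈ {p | GoodP act δ ra p}} := by
    ext ω
    simp only [Set.mem_setOf_eq, Set.mem_iInter]
  have e2 : {ω : Traj (S ⊕ Fin 2) (A ⊕ Fin 2) | ∀ n, (((ω n).1).isLeft : Prop)}
      = ⋂ n, {ω | ω n ∈ {p : (S ⊕ Fin 2) × (A ⊕ Fin 2) | ((p.1).isLeft : Prop)}} := by
    ext ω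
    simp only [Set.mem_setOf_eq, Set.mem_iInter]
  rw [ESet, e1, e2]
  exact ((MeasurableSet.iInter fun n => MeasurableSet.iInter fun _ =>
    measurable_coord n _)).inter (MeasurableSet.iInter fun n => measurable_coord n _)

lemma ESet_mono (act : S → Finset A) (δ : Fin 2 → S → A → S → ℝ) (ra : S → A) :
    Monotone (fun T => ESet act δ ra T) := by
  intro T T' hTT ω hω
  exact ⟨fun n hn => hω.1 n (le_trans hTT hn), hω.2⟩

/-- The null set of trajectories with an impossible finite prefix. -/
def ZSet (δ : Fin 2 → S → A → S → ℝ) (γ : ℝ) (init : S)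
    (πf : (t : ℕ) → Hist (S ⊕ Fin 2) (A ⊕ Fin 2) t → (A ⊕ Fin 2) → ℝ) :
    Set (Traj (S ⊕ Fin 2) (A ⊕ Fin 2)) :=
  ⋃ t, ⋃ h ∈ Finset.univ.filter (fun h : Hist (S ⊕ Fin 2) (A ⊕ Fin 2) t =>
    histProb (Sum.inl init) (dIKer δ γ) πf t h = 0), Cyl h

lemma ZSet_null (δ : Fin 2 → S → A → S → ℝ) (γ : ℝ) (init : S)
    (πf : (t : ℕ) → Hist (S ⊕ Fin 2) (A ⊕ Fin 2) t → (A ⊕ Fin 2) → ℝ)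
    (PI : Measure (Traj (S ⊕ Fin 2) (A ⊕ Fin 2)))
    (hcyl : ∀ (t : ℕ) (h : Hist (S ⊕ Fin 2) (A ⊕ Fin 2) t),
      PI (Cyl h) = ENNReal.ofReal (histProb (Sum.inl init) (dIKer δ γ) πf t h)) :
    PI (ZSet δ γ init πf) = 0 := by
  refine measure_iUnion_null fun t => ?_
  rw [measure_biUnion_Cyl]
  refine Finset.sum_eq_zero fun h hh => ?_
  rw [Finset.mem_filter] at hh
  rw [hcyl t h, hh.2, ENNReal.ofReal_zero]

lemma notin_ZSet (δ : Fin 2 → S → A → S → ℝ) (γ : ℝ) (init : S)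
    (πf : (t : ℕ) → Hist (S ⊕ Fin 2) (A ⊕ Fin 2) t → (A ⊕ Fin 2) → ℝ)
    (ω : Traj (S ⊕ Fin 2) (A ⊕ Fin 2)) (hω : ω ∉ ZSet δ γ init πf) (t : ℕ) :
    histProb (Sum.inl init) (dIKer δ γ) πf t (prefT ω t) ≠ 0 := by
  intro h0
  apply hω
  rw [ZSet]
  refine Set.mem_iUnion.mpr ⟨t, ?_⟩
  simp only [Set.mem_iUnion]
  exact ⟨prefT ω t, Finset.mem_filter.mpr ⟨Finset.mem_univ _, h0⟩,
    (mem_Cyl_iff _ ω).mpr rfl⟩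

lemma Q_step (δ : Fin 2 → S → A → S → ℝ) (γ : ℝ) (init : S)
    (πf : (t : ℕ) → Hist (S ⊕ Fin 2) (A ⊕ Fin 2) t → (A ⊕ Fin 2) → ℝ)
    (ω : Traj (S ⊕ Fin 2) (A ⊕ Fin 2)) (t : ℕ) :
    histProb (Sum.inl init) (dIKer δ γ) πf (t + 1) (prefT ω (t + 1))
      = histProb (Sum.inl init) (dIKer δ γ) πf t (prefT ω t)
        * (πf t (prefT ω t) ((ω t).2) * dIKer δ γ ((ω t).1) ((ω t).2) ((ω (t+1)).1)) := by
  rw [prefT_succ, histProb_hSnoc, lastState_prefT]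

lemma plausible_facts (δ : Fin 2 → S → A → S → ℝ) (γ : ℝ) (init : S)
    (πf : (t : ℕ) → Hist (S ⊕ Fin 2) (A ⊕ Fin 2) t → (A ⊕ Fin 2) → ℝ)
    (ω : Traj (S ⊕ Fin 2) (A ⊕ Fin 2))
    (hQ : ∀ t, histProb (Sum.inl init) (dIKer δ γ) πf t (prefT ω t) ≠ 0) (t : ℕ) :
    πf t (prefT ω t) ((ω t).2) ≠ 0
      ∧ dIKer δ γ ((ω t).1) ((ω t).2) ((ω (t+1)).1) ≠ 0 := by
  have h := hQ (t + 1)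
  rw [Q_step] at h
  have h2 := (mul_ne_zero_iff.mp h).2
  exact mul_ne_zero_iff.mp h2

lemma absorb (act : S → Finset A) (δ : Fin 2 → S → A → S → ℝ) (ra : S → A)
    (γ : ℝ) (init : S)
    (πf : (t : ℕ) → Hist (S ⊕ Fin 2) (A ⊕ Fin 2) t → (A ⊕ Fin 2) → ℝ)
    (hπz : ∀ t h a, a ∉ actp act δ ra (lastState h) → πf t h a = 0)
    (ω : Traj (S ⊕ Fin 2) (A ⊕ Fin 2))
    (hQ : ∀ t, histProb (Sum.inl init) (dIKer δ γ) πf t (prefT ω t) ≠ 0)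
    (n : ℕ) (j : Fin 2) (hst : (ω n).1 = Sum.inr j) :
    ∀ m, n ≤ m → ω m = (Sum.inr j, Sum.inr j) := by
  have hact : ∀ m, (ω m).1 = Sum.inr j → (ω m).2 = Sum.inr j := by
    intro m hm
    have hπ := (plausible_facts δ γ init πf ω hQ m).1
    have hmem : (ω m).2 ∈ actp act δ ra (Sum.inr j) := by
      by_contra hx
      refine hπ (hπz m (prefT ω m) ((ω m).2) ?_)
      rw [lastState_prefT, hm]
      exact hx
    simpa [actp] using hmem
  have hnext : ∀ m, (ω m).1 = Sum.inr j → (ω (m + 1)).1 = Sum.inr j := by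
    intro m hm
    have hdI := (plausible_facts δ γ init πf ω hQ m).2
    rw [hm] at hdI
    by_contra hne
    refine hdI ?_
    show γ * δp δ 0 (Sum.inr j) ((ω m).2) ((ω (m+1)).1)
        + (1 - γ) * δp δ 1 (Sum.inr j) ((ω m).2) ((ω (m+1)).1) = 0
    rw [δp_inr, δp_inr, if_neg hne]
    ring
  have hstate : ∀ m, n ≤ m → (ω m).1 = Sum.inr j := by
    intro m hm
    induction m, hm using Nat.le_induction with
    | base => exact hst
    | succ m hm IH => exact hnext m IH
  intro m hm
  exact Prod.ext (hstate m hm) (hact m (hstate m hm))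

lemma dI_pos_pair (δ : Fin 2 → S → A → S → ℝ) {γ : ℝ} (hγ0 : 0 < γ) (hγ1 : γ < 1)
    (hδ0 : ∀ i s a s', 0 ≤ δ i s a s') (s₀ : S) (a₀ : A) (s₁ : S)
    (hdI : dIKer δ γ (Sum.inl s₀) (Sum.inl a₀) (Sum.inl s₁) ≠ 0) :
    0 < δp δ 0 (Sum.inl s₀) (Sum.inl a₀) (Sum.inl s₁)
      ∧ 0 < δp δ 1 (Sum.inl s₀) (Sum.inl a₀) (Sum.inl s₁) := by
  by_cases hrev : RevealingPair δ s₀ a₀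
  · exfalso
    refine hdI ?_
    show γ * δp δ 0 (Sum.inl s₀) (Sum.inl a₀) (Sum.inl s₁)
        + (1 - γ) * δp δ 1 (Sum.inl s₀) (Sum.inl a₀) (Sum.inl s₁) = 0
    rw [δp_lll, δp_lll, if_pos hrev, if_pos hrev]
    ring
  · have hor : δp δ 0 (Sum.inl s₀) (Sum.inl a₀) (Sum.inl s₁) ≠ 0
        ∨ δp δ 1 (Sum.inl s₀) (Sum.inl a₀) (Sum.inl s₁) ≠ 0 := by
      by_contra hc
      push_neg at hc
      refine hdI ?_
      show γ * δp δ 0 (Sum.inl s₀) (Sum.inl a₀) (Sum.inl s₁)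
          + (1 - γ) * δp δ 1 (Sum.inl s₀) (Sum.inl a₀) (Sum.inl s₁) = 0
      rw [hc.1, hc.2]
      ring
    by_cases hinf : InformativePair δ s₀ a₀
    · have e0 : δp δ 0 (Sum.inl s₀) (Sum.inl a₀) (Sum.inl s₁)
          = if 0 < δ 1 s₀ a₀ s₁ then δ 0 s₀ a₀ s₁ else 0 := by
        rw [δp_lll, if_neg hrev, if_pos hinf, fin2_sub_zero]
      have e1 : δp δ 1 (Sum.inl s₀) (Sum.inl a₀) (Sum.inl s₁)
          = if 0 < δ 0 s₀ a₀ s₁ then δ 1 s₀ a₀ s₁ else 0 := by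
        rw [δp_lll, if_neg hrev, if_pos hinf, fin2_sub_one]
      have hboth : 0 < δ 0 s₀ a₀ s₁ ∧ 0 < δ 1 s₀ a₀ s₁ := by
        rcases hor with h | h
        · rw [e0] at h
          by_cases hδ1p : 0 < δ 1 s₀ a₀ s₁
          · rw [if_pos hδ1p] at h
            exact ⟨lt_of_le_of_ne (hδ0 0 s₀ a₀ s₁) (Ne.symm h), hδ1p⟩
          · rw [if_neg hδ1p] at h
            exact absurd rfl h
        · rw [e1] at h
          by_cases hδ0p : 0 < δ 0 s₀ a₀ s₁
          · rw [if_pos hδ0p] at h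
            exact ⟨hδ0p, lt_of_le_of_ne (hδ0 1 s₀ a₀ s₁) (Ne.symm h)⟩
          · rw [if_neg hδ0p] at h
            exact absurd rfl h
      constructor
      · rw [e0, if_pos hboth.2]
        exact hboth.1
      · rw [e1, if_pos hboth.1]
        exact hboth.2
    · have hrows := not_inf_rows δ hrev hinf
      have e0 : δp δ 0 (Sum.inl s₀) (Sum.inl a₀) (Sum.inl s₁) = δ 0 s₀ a₀ s₁ := by
        rw [δp_lll, if_neg hrev, if_neg hinf]
      have e1 : δp δ 1 (Sum.inl s₀) (Sum.inl a₀) (Sum.inl s₁) = δ 1 s₀ a₀ s₁ := by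
        rw [δp_lll, if_neg hrev, if_neg hinf]
      have heq : δ 0 s₀ a₀ s₁ = δ 1 s₀ a₀ s₁ := congrFun hrows s₁
      have hne0 : δ 0 s₀ a₀ s₁ ≠ 0 := by
        intro hz
        refine hdI ?_
        show γ * δp δ 0 (Sum.inl s₀) (Sum.inl a₀) (Sum.inl s₁)
            + (1 - γ) * δp δ 1 (Sum.inl s₀) (Sum.inl a₀) (Sum.inl s₁) = 0
        rw [e0, e1, ← heq, hz]
        ring
      have hp : 0 < δ 0 s₀ a₀ s₁ := lt_of_le_of_ne (hδ0 0 s₀ a₀ s₁) (Ne.symm hne0)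
      exact ⟨by rw [e0]; exact hp, by rw [e1, ← heq]; exact hp⟩

lemma action_inl_of_avail (act : S → Finset A) (δ : Fin 2 → S → A → S → ℝ)
    (ra : S → A) (s : S) (ap : A ⊕ Fin 2) (hap : ap ∈ actp act δ ra (Sum.inl s)) :
    ∃ a₀ : A, ap = Sum.inl a₀ := by
  by_cases hrs : RevealingState act δ s
  · simp only [actp, if_pos hrs, Finset.mem_singleton] at hap
    exact ⟨ra s, hap⟩
  · simp only [actp, if_neg hrs, Finset.mem_image] at hap
    obtain ⟨a, _, rfl⟩ := hap
    exact ⟨a, rfl⟩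

lemma escape (act : S → Finset A) (δ : Fin 2 → S → A → S → ℝ) (ra : S → A)
    (hδ0 : ∀ i s a s', 0 ≤ δ i s a s') {γ : ℝ} (hγ0 : 0 < γ) (hγ1 : γ < 1)
    (init : S)
    (πf : (t : ℕ) → Hist (S ⊕ Fin 2) (A ⊕ Fin 2) t → (A ⊕ Fin 2) → ℝ)
    (hπz : ∀ t h a, a ∉ actp act δ ra (lastState h) → πf t h a = 0)
    (ω : Traj (S ⊕ Fin 2) (A ⊕ Fin 2))
    (hQ : ∀ t, histProb (Sum.inl init) (dIKer δ γ) πf t (prefT ω t) ≠ 0)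
    (hnoev : ¬ (InfOften ω ∩ ISAp act δ ra).Nonempty) :
    ∃ T, ω ∈ ESet act δ ra T := by
  -- all states stay on the left
  have hL : ∀ n, (((ω n).1).isLeft : Prop) := by
    intro n
    by_contra hx
    obtain ⟨j, hj⟩ : ∃ j, (ω n).1 = Sum.inr j := by
      rcases hc : (ω n).1 with s | j
      · rw [hc] at hx
        exact absurd rfl hx
      · exact ⟨j, rfl⟩
    have habs := absorb act δ ra γ init πf hπz ω hQ n j hj
    refine hnoev ⟨(Sum.inr j, Sum.inr j), ?_, Or.inr ⟨j, rfl⟩⟩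
    show {m | ω m = (Sum.inr j, Sum.inr j)}.Infinite
    refine Set.Infinite.mono (fun m (hm : m ∈ Set.Ici n) => habs m hm) ?_
    exact Set.Ici_infinite n
  -- only finitely many informative steps
  have hfin : {n | Ppred act δ ra (ω n)}.Finite := by
    by_contra hinf
    obtain ⟨p, hp⟩ := exists_eq_infinite (g := ω) (show Set.Infinite _ from hinf)
    have hpne : {n | n ∈ {n | Ppred act δ ra (ω n)} ∧ ω n = p}.Nonempty :=
      hp.nonempty
    obtain ⟨n₀, hn₀P, hn₀e⟩ := hpne
    have hPp : Ppred act δ ra p := hn₀e ▸ hn₀P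
    refine hnoev ⟨p, ?_, Or.inl hPp⟩
    show {m | ω m = p}.Infinite
    exact Set.Infinite.mono (fun m hm => hm.2) hp
  obtain ⟨T₀, hT₀⟩ := hfin.bddAbove
  refine ⟨T₀ + 1, ?_, hL⟩
  intro n hn
  have hnP : ¬ Ppred act δ ra (ω n) := by
    intro hP
    exact absurd (hT₀ hP) (by omega)
  -- the pair at time n
  obtain ⟨s, hs⟩ : ∃ s, (ω n).1 = Sum.inl s := by
    have := hL n
    rcases hc : (ω n).1 with s | j
    · exact ⟨s, rfl⟩
    · rw [hc] at this
      exact absurd this (by simp)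
  have hπn := (plausible_facts δ γ init πf ω hQ n).1
  have hav : (ω n).2 ∈ actp act δ ra ((ω n).1) := by
    by_contra hx
    refine hπn (hπz n (prefT ω n) ((ω n).2) ?_)
    rw [lastState_prefT]
    exact hx
  obtain ⟨a₀, ha₀⟩ : ∃ a₀, (ω n).2 = Sum.inl a₀ := by
    rw [hs] at hav
    exact action_inl_of_avail act δ ra s ((ω n).2) hav
  obtain ⟨s₁, hs₁⟩ : ∃ s₁, (ω (n+1)).1 = Sum.inl s₁ := by
    have := hL (n+1)
    rcases hc : (ω (n+1)).1 with s₁ | j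
    · exact ⟨s₁, rfl⟩
    · rw [hc] at this
      exact absurd this (by simp)
  have hdI := (plausible_facts δ γ init πf ω hQ n).2
  rw [hs, ha₀, hs₁] at hdI
  by_cases hrev : RevealingPair δ s a₀
  · exfalso
    refine hdI ?_
    show γ * δp δ 0 (Sum.inl s) (Sum.inl a₀) (Sum.inl s₁)
        + (1 - γ) * δp δ 1 (Sum.inl s) (Sum.inl a₀) (Sum.inl s₁) = 0
    rw [δp_lll, δp_lll, if_pos hrev, if_pos hrev]
    ring
  · by_cases hinf : InformativePair δ s a₀
    · exfalso
      refine hnP ?_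
      refine ⟨hav, ?_⟩
      rw [hs, ha₀]
      exact inf_lift δ hδ0 hinf
    · refine ⟨hav, ?_⟩
      rw [hs, ha₀]
      exact eq_rows_δp δ hrev hinf

end NecHelpers

section NecDir
open MeasureTheory Filter
open scoped Classical

variable {S A : Type}

/-- Truncate a history to its first `T` steps. -/
def histTake {T t : ℕ} (hle : T ≤ t) (h : Hist S A t) : Hist S A T :=
  (fun i => h.1 (Fin.castLE (Nat.succ_le_succ hle) i),
   fun i => h.2 (Fin.castLE hle i))

lemma histTake_self {T : ℕ} (hle : T ≤ T) (h : Hist S A T) : histTake hle h = h := by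
  refine Prod.ext (funext fun i => ?_) (funext fun i => ?_) <;>
    exact congrArg _ (Fin.ext rfl)

lemma histTake_prefT (ω : Traj S A) {T t : ℕ} (hle : T ≤ t) :
    histTake hle (prefT ω t) = prefT ω T := rfl

lemma histTake_hSnoc {T t : ℕ} (hle : T ≤ t) (hle' : T ≤ t + 1)
    (h : Hist S A t) (a : A) (s : S) :
    histTake hle' (hSnoc h a s) = histTake hle h := by
  refine Prod.ext (funext fun i => ?_) (funext fun i => ?_)
  · exact snoc_of_lt h.1 s _ (lt_of_lt_of_le i.isLt (Nat.succ_le_succ hle))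
  · exact snoc_of_lt h.2 a _ (lt_of_lt_of_le i.isLt hle)

variable [Fintype S] [Fintype A] [DecidableEq S] [DecidableEq A]

/-- Extensions of `hT` that stay left and use only equal-rows pairs after time `T`. -/
noncomputable def extSet (act : S → Finset A) (δ : Fin 2 → S → A → S → ℝ)
    (ra : S → A) {T : ℕ} (hT : Hist (S ⊕ Fin 2) (A ⊕ Fin 2) T) (n : ℕ) :
    Finset (Hist (S ⊕ Fin 2) (A ⊕ Fin 2) (T + n)) :=
  Finset.univ.filter fun h =>
    histTake (Nat.le_add_right T n) h = hT ∧ (∀ i, ((h.1 i).isLeft : Prop)) ∧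
      ∀ τ : Fin (T + n), T ≤ τ.val → GoodP act δ ra (h.1 τ.castSucc, h.2 τ)

lemma ext_subset_cyl (act : S → Finset A) (δ : Fin 2 → S → A → S → ℝ)
    (ra : S → A) {T : ℕ} (hT : Hist (S ⊕ Fin 2) (A ⊕ Fin 2) T) (n : ℕ) :
    Cyl hT ∩ ESet act δ ra T ⊆ ⋃ h ∈ extSet act δ ra hT n, Cyl h := by
  rintro ω ⟨hcyl, hgood, hleft⟩
  simp only [Set.mem_iUnion]
  refine ⟨prefT ω (T + n), ?_, (mem_Cyl_iff _ _).mpr rfl⟩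
  rw [extSet, Finset.mem_filter]
  refine ⟨Finset.mem_univ _, ?_, fun i => hleft i.val, fun τ hτ => ?_⟩
  · rw [histTake_prefT]
    exact (mem_Cyl_iff hT ω).mp hcyl
  · exact hgood τ.val hτ

lemma ext_ratio (act : S → Finset A) (δ : Fin 2 → S → A → S → ℝ) (ra : S → A)
    (hδ0 : ∀ i s a s', 0 ≤ δ i s a s') {γ : ℝ} (init : S)
    (πf : (t : ℕ) → Hist (S ⊕ Fin 2) (A ⊕ Fin 2) t → (A ⊕ Fin 2) → ℝ)
    {T : ℕ} (hT : Hist (S ⊕ Fin 2) (A ⊕ Fin 2) T) :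
    ∀ n, ∀ h ∈ extSet act δ ra hT n,
      histProb (Sum.inl init) (sqKer δ) πf (T + n) h
          * histProb (Sum.inl init) (dIKer δ γ) πf T hT
        = histProb (Sum.inl init) (dIKer δ γ) πf (T + n) h
          * histProb (Sum.inl init) (sqKer δ) πf T hT := by
  intro n
  induction n with
  | zero =>
      intro h hh
      rw [extSet, Finset.mem_filter] at hh
      have he : h = hT := by
        rw [← hh.2.1, histTake_self]
      rw [he]
      exact mul_comm _ _
  | succ n IH =>
      intro h hh
      obtain ⟨h₀, a, s, rfl⟩ : ∃ h₀ a s, hSnoc h₀ a s = h :=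
        ⟨hTrunc h, h.2 (Fin.last (T + n)), h.1 (Fin.last (T + n + 1)), hSnoc_hTrunc h⟩
      rw [extSet, Finset.mem_filter] at hh
      obtain ⟨-, htake, hleft, hgood⟩ := hh
      -- the truncation is still a good extension
      have hmem₀ : h₀ ∈ extSet act δ ra hT n := by
        rw [extSet, Finset.mem_filter]
        refine ⟨Finset.mem_univ _, ?_, fun i => ?_, fun τ hτ => ?_⟩
        · rw [← histTake_hSnoc (Nat.le_add_right T n) (Nat.le_add_right T (n+1)) h₀ a s]
          exact htake
        · have := hleft i.castSucc
          rw [show (hSnoc h₀ a s).1 i.castSucc = h₀.1 i from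
            snoc_app_castSucc h₀.1 s i] at this
          exact this
        · have := hgood τ.castSucc (by simpa using hτ)
          rw [show (hSnoc h₀ a s).1 τ.castSucc.castSucc = h₀.1 τ.castSucc from
            snoc_app_castSucc h₀.1 s τ.castSucc,
            show (hSnoc h₀ a s).2 τ.castSucc = h₀.2 τ from
            snoc_app_castSucc h₀.2 a τ] at this
          exact this
      have hIH := IH h₀ hmem₀
      -- the appended step has equal rows
      have hlastGood : GoodP act δ ra (lastState h₀, a) := by
        have := hgood (Fin.last (T + n)) (by simp)
        rw [show (hSnoc h₀ a s).1 (Fin.last (T + n)).castSucc = lastState h₀ from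
          snoc_app_castSucc h₀.1 s (Fin.last (T + n)),
          show (hSnoc h₀ a s).2 (Fin.last (T + n)) = a from snoc_app_last h₀.2 a] at this
        exact this
      have hrows : δp δ 0 (lastState h₀) a = δp δ 1 (lastState h₀) a := hlastGood.2
      have hker : sqKer δ (lastState h₀) a s = dIKer δ γ (lastState h₀) a s := by
        show Real.sqrt (δp δ 0 (lastState h₀) a s * δp δ 1 (lastState h₀) a s)
          = γ * δp δ 0 (lastState h₀) a s + (1 - γ) * δp δ 1 (lastState h₀) a s
        rw [← congrFun hrows s, Real.sqrt_mul_self (δp_nonneg δ hδ0 0 _ _ _)]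
        ring
      change histProb (Sum.inl init) (sqKer δ) πf ((T + n) + 1) (hSnoc h₀ a s) * _
        = histProb (Sum.inl init) (dIKer δ γ) πf ((T + n) + 1) (hSnoc h₀ a s) * _
      rw [histProb_hSnoc, histProb_hSnoc, hker]
      linear_combination (πf (T + n) h₀ a * dIKer δ γ (lastState h₀) a s) * hIH

lemma nu_pos (act : S → Finset A) (δ : Fin 2 → S → A → S → ℝ) (ra : S → A)
    (hδ0 : ∀ i s a s', 0 ≤ δ i s a s') {γ : ℝ} (hγ0 : 0 < γ) (hγ1 : γ < 1)
    (init : S)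
    (πf : (t : ℕ) → Hist (S ⊕ Fin 2) (A ⊕ Fin 2) t → (A ⊕ Fin 2) → ℝ)
    (hπ : ∀ t h a, 0 ≤ πf t h a)
    (hπz : ∀ t h a, a ∉ actp act δ ra (lastState h) → πf t h a = 0) :
    ∀ (T : ℕ) (h : Hist (S ⊕ Fin 2) (A ⊕ Fin 2) T),
      histProb (Sum.inl init) (dIKer δ γ) πf T h ≠ 0 →
      (∀ i, ((h.1 i).isLeft : Prop)) →
      0 < histProb (Sum.inl init) (sqKer δ) πf T h := by
  intro T
  induction T with
  | zero =>
      intro h hQ hL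
      by_cases hc : h.1 0 = Sum.inl init
      · rw [histProb_zero, if_pos hc]
        norm_num
      · rw [histProb_zero, if_neg hc] at hQ
        exact absurd rfl hQ
  | succ T IH =>
      intro h hQ hL
      obtain ⟨h₀, a, s, rfl⟩ : ∃ h₀ a s, hSnoc h₀ a s = h :=
        ⟨hTrunc h, h.2 (Fin.last T), h.1 (Fin.last (T + 1)), hSnoc_hTrunc h⟩
      rw [histProb_hSnoc] at hQ ⊢
      have hQ0 := (mul_ne_zero_iff.mp hQ).1
      have hπa := (mul_ne_zero_iff.mp (mul_ne_zero_iff.mp hQ).2).1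
      have hdI := (mul_ne_zero_iff.mp (mul_ne_zero_iff.mp hQ).2).2
      have hL0 : ∀ i, ((h₀.1 i).isLeft : Prop) := by
        intro i
        have := hL i.castSucc
        rw [show (hSnoc h₀ a s).1 i.castSucc = h₀.1 i from
          snoc_app_castSucc h₀.1 s i] at this
        exact this
      obtain ⟨s₀, hs₀⟩ : ∃ s₀, lastState h₀ = Sum.inl s₀ := by
        have := hL0 (Fin.last T)
        rcases hc : h₀.1 (Fin.last T) with s₀ | j
        · exact ⟨s₀, hc⟩
        · rw [hc] at this
          exact absurd this (by simp)
      obtain ⟨s₁, hs₁⟩ : ∃ s₁, s = Sum.inl s₁ := by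
        have := hL (Fin.last (T + 1))
        rw [show (hSnoc h₀ a s).1 (Fin.last (T + 1)) = s from snoc_app_last h₀.1 s]
          at this
        rcases hc : s with s₁ | j
        · exact ⟨s₁, rfl⟩
        · rw [hc] at this
          exact absurd this (by simp)
      have hav : a ∈ actp act δ ra (lastState h₀) := by
        by_contra hx
        exact hπa (hπz T h₀ a hx)
      obtain ⟨a₀, ha₀⟩ : ∃ a₀, a = Sum.inl a₀ := by
        rw [hs₀] at hav
        exact action_inl_of_avail act δ ra s₀ a hav
      have hdI' : dIKer δ γ (Sum.inl s₀) (Sum.inl a₀) (Sum.inl s₁) ≠ 0 := by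
        rw [← hs₀, ← ha₀, ← hs₁]
        exact hdI
      obtain ⟨hp0, hp1⟩ := dI_pos_pair δ hγ0 hγ1 hδ0 s₀ a₀ s₁ hdI'
      have hsq : 0 < sqKer δ (lastState h₀) a s := by
        rw [hs₀, ha₀, hs₁]
        exact Real.sqrt_pos.mpr (mul_pos hp0 hp1)
      have hπp : 0 < πf T h₀ a := lt_of_le_of_ne (hπ T h₀ a) (Ne.symm hπa)
      exact mul_pos (IH h₀ hQ0 hL0) (mul_pos hπp hsq)

end NecDir

section NecMain
open MeasureTheory Filter
open scoped Classical

variable {S A : Type} [Fintype S] [Fintype A] [DecidableEq S] [DecidableEq A]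

lemma nec_dir (act : S → Finset A) (δ : Fin 2 → S → A → S → ℝ) (ra : S → A)
    (hδ0 : ∀ i s a s', 0 ≤ δ i s a s')
    {γ : ℝ} (hγ0 : 0 < γ) (hγ1 : γ < 1) (init : S)
    (πf : (t : ℕ) → Hist (S ⊕ Fin 2) (A ⊕ Fin 2) t → (A ⊕ Fin 2) → ℝ)
    (hπ : ∀ t h a, 0 ≤ πf t h a)
    (hπz : ∀ t h a, a ∉ actp act δ ra (lastState h) → πf t h a = 0)
    (PI : Measure (Traj (S ⊕ Fin 2) (A ⊕ Fin 2)))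
    (hprob : IsProbabilityMeasure PI)
    (hcyl : ∀ (t : ℕ) (h : Hist (S ⊕ Fin 2) (A ⊕ Fin 2) t),
      PI (Cyl h) = ENNReal.ofReal (histProb (Sum.inl init) (dIKer δ γ) πf t h))
    (hev : PI {ω | (InfOften ω ∩ ISAp act δ ra).Nonempty} ≠ 1) :
    ¬ Tendsto (fun t => BC (Sum.inl init) (δp δ 0) (δp δ 1) πf t) atTop (nhds 0) := by
  intro htend
  have hν : ∀ t h, 0 ≤ histProb (Sum.inl init) (sqKer δ) πf t h :=
    histProb_nonneg _ _ (sqKer_nonneg δ) πf hπ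
  have hQnn : ∀ t h, 0 ≤ histProb (Sum.inl init) (dIKer δ γ) πf t h :=
    histProb_nonneg _ _ (dIKer_nonneg δ hγ0 hγ1 hδ0) πf hπ
  have hlt : PI {ω | (InfOften ω ∩ ISAp act δ ra).Nonempty} < 1 :=
    lt_of_le_of_ne prob_le_one hev
  have hposc : 0 < PI {ω | (InfOften ω ∩ ISAp act δ ra).Nonempty}ᶜ := by
    rw [measure_compl (measurableSet_infOften _) (measure_ne_top _ _), measure_univ]
    exact tsub_pos_of_lt hlt
  have hZ : PI (ZSet δ γ init πf) = 0 := ZSet_null δ γ init πf PI hcyl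
  have hsub : {ω | (InfOften ω ∩ ISAp act δ ra).Nonempty}ᶜ
      ⊆ ZSet δ γ init πf ∪ ⋃ T, ESet act δ ra T := by
    intro ω hω
    by_cases hz : ω ∈ ZSet δ γ init πf
    · exact Or.inl hz
    · refine Or.inr (Set.mem_iUnion.mpr ?_)
      exact escape act δ ra hδ0 hγ0 hγ1 init πf hπz ω
        (notin_ZSet δ γ init πf ω hz) hω
  have hUnionPos : 0 < PI (⋃ T, ESet act δ ra T) := by
    have h1 := measure_mono (μ := PI) hsub
    have h2 := le_trans h1 (measure_union_le (μ := PI) (ZSet δ γ init πf) (⋃ T, ESet act δ ra T))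
    rw [hZ, zero_add] at h2
    exact lt_of_lt_of_le hposc h2
  obtain ⟨T, hTpos⟩ : ∃ T, 0 < PI (ESet act δ ra T) := by
    by_contra hcc
    push_neg at hcc
    have hz : ∀ T, PI (ESet act δ ra T) = 0 :=
      fun T => le_antisymm (hcc T) zero_le
    rw [Directed.measure_iUnion ((ESet_mono act δ ra).directed_le)] at hUnionPos
    simp only [hz, iSup_const] at hUnionPos
    exact lt_irrefl 0 hUnionPos
  -- find a cylinder with positive overlap
  have hcover : ESet act δ ra T
      ⊆ ⋃ h ∈ (Finset.univ : Finset (Hist (S ⊕ Fin 2) (A ⊕ Fin 2) T)),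
          (Cyl h ∩ ESet act δ ra T) := by
    intro ω hω
    simp only [Set.mem_iUnion]
    exact ⟨prefT ω T, Finset.mem_univ _, (mem_Cyl_iff _ _).mpr rfl, hω⟩
  obtain ⟨hT, hεpos⟩ : ∃ h : Hist (S ⊕ Fin 2) (A ⊕ Fin 2) T,
      0 < PI (Cyl h ∩ ESet act δ ra T) := by
    by_contra hcc
    push_neg at hcc
    have hzz : ∀ h : Hist (S ⊕ Fin 2) (A ⊕ Fin 2) T,
        PI (Cyl h ∩ ESet act δ ra T) = 0 :=
      fun h => le_antisymm (hcc h) zero_le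
    have := le_trans (measure_mono hcover)
      (measure_biUnion_finset_le (μ := PI) Finset.univ (fun h => Cyl h ∩ ESet act δ ra T))
    simp only [hzz, Finset.sum_const_zero] at this
    exact lt_irrefl 0 (lt_of_lt_of_le hTpos this)
  set ε := PI (Cyl hT ∩ ESet act δ ra T) with hεdef
  have hεtop : ε ≠ ⊤ := measure_ne_top _ _
  -- positivity facts about `hT`
  have hQT : 0 < histProb (Sum.inl init) (dIKer δ γ) πf T hT := by
    rcases lt_or_eq_of_le (hQnn T hT) with h | h
    · exact h
    · exfalso
      have h1 : ε ≤ PI (Cyl hT) := measure_mono Set.inter_subset_left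
      rw [hcyl T hT, ← h, ENNReal.ofReal_zero] at h1
      exact absurd h1 (not_le.mpr hεpos)
  obtain ⟨ω₀, hω₀c, hω₀E⟩ :=
    MeasureTheory.nonempty_of_measure_ne_zero hεpos.ne'
  have hLT : ∀ i, (((hT.1 i).isLeft : Prop)) := by
    intro i
    have h1 : prefT ω₀ T = hT := (mem_Cyl_iff hT ω₀).mp hω₀c
    have h2 := hω₀E.2 i.val
    rw [← h1]
    exact h2
  have hνT : 0 < histProb (Sum.inl init) (sqKer δ) πf T hT :=
    nu_pos act δ ra hδ0 hγ0 hγ1 init πf hπ hπz T hT hQT.ne' hLT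
  set β := histProb (Sum.inl init) (sqKer δ) πf T hT
      / histProb (Sum.inl init) (dIKer δ γ) πf T hT * ε.toReal with hβdef
  have hβpos : 0 < β := by
    have : 0 < ε.toReal := ENNReal.toReal_pos hεpos.ne' hεtop
    positivity
  -- the uniform lower bound
  have hlower : ∀ n, β ≤ BC (Sum.inl init) (δp δ 0) (δp δ 1) πf (T + n) := by
    intro n
    have hεle : ε.toReal ≤ ∑ h ∈ extSet act δ ra hT n,
        histProb (Sum.inl init) (dIKer δ γ) πf (T + n) h := by
      have h1 : ε ≤ PI (⋃ h ∈ extSet act δ ra hT n, Cyl h) :=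
        measure_mono (ext_subset_cyl act δ ra hT n)
      have h2 : PI (⋃ h ∈ extSet act δ ra hT n, Cyl h)
          = ENNReal.ofReal (∑ h ∈ extSet act δ ra hT n,
              histProb (Sum.inl init) (dIKer δ γ) πf (T + n) h) := by
        rw [measure_biUnion_Cyl,
          Finset.sum_congr rfl (fun h _ => hcyl (T + n) h),
          ← ENNReal.ofReal_sum_of_nonneg (fun h _ => hQnn (T + n) h)]
      rw [h2] at h1
      calc ε.toReal ≤ (ENNReal.ofReal (∑ h ∈ extSet act δ ra hT n,
            histProb (Sum.inl init) (dIKer δ γ) πf (T + n) h)).toReal :=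
            ENNReal.toReal_mono ENNReal.ofReal_ne_top h1
        _ = _ := ENNReal.toReal_ofReal
            (Finset.sum_nonneg fun h _ => hQnn (T + n) h)
    have hratio : ∀ h ∈ extSet act δ ra hT n,
        histProb (Sum.inl init) (sqKer δ) πf (T + n) h
          = histProb (Sum.inl init) (dIKer δ γ) πf (T + n) h
            * (histProb (Sum.inl init) (sqKer δ) πf T hT
              / histProb (Sum.inl init) (dIKer δ γ) πf T hT) := by
      intro h hh
      have := ext_ratio act δ ra hδ0 (γ := γ) init πf hT n h hh
      field_simp
      linarith [this]
    have hBCeq : BC (Sum.inl init) (δp δ 0) (δp δ 1) πf (T + n)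
        = ∑ h : Hist (S ⊕ Fin 2) (A ⊕ Fin 2) (T + n),
            histProb (Sum.inl init) (sqKer δ) πf (T + n) h :=
      Finset.sum_congr rfl fun h _ =>
        sqrt_histProb_eq δ hδ0 (Sum.inl init) πf hπ (T + n) h
    rw [hBCeq]
    calc β = ε.toReal * (histProb (Sum.inl init) (sqKer δ) πf T hT
          / histProb (Sum.inl init) (dIKer δ γ) πf T hT) := by
          rw [hβdef]; ring
      _ ≤ (∑ h ∈ extSet act δ ra hT n,
            histProb (Sum.inl init) (dIKer δ γ) πf (T + n) h)
          * (histProb (Sum.inl init) (sqKer δ) πf T hT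
            / histProb (Sum.inl init) (dIKer δ γ) πf T hT) := by
          refine mul_le_mul_of_nonneg_right hεle ?_
          positivity
      _ = ∑ h ∈ extSet act δ ra hT n,
            histProb (Sum.inl init) (sqKer δ) πf (T + n) h := by
          rw [Finset.sum_mul]
          exact (Finset.sum_congr rfl fun h hh => (hratio h hh).symm)
      _ ≤ ∑ h : Hist (S ⊕ Fin 2) (A ⊕ Fin 2) (T + n),
            histProb (Sum.inl init) (sqKer δ) πf (T + n) h :=
          Finset.sum_le_sum_of_subset_of_nonneg (Finset.subset_univ _)
            (fun h _ _ => hν (T + n) h)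
  obtain ⟨N, hN⟩ := eventually_atTop.mp (htend.eventually_lt_const hβpos)
  have h1 := hN (T + N) (by omega)
  have h2 := hlower N
  exact absurd h1 (not_lt.mpr h2)

end NecMain

/-- **Necessary and sufficient condition for asymptotic perfect detection of binary MMDPs.**
Let `M` be a binary MMDP given by `(act, init, δ 0, δ 1)`, `M^p = {M₁^p, M₂^p}` its
preprocessed MMDP (with chosen revealing actions `ra`), and `M^I` any of its informative
MDPs (kernel `δ^I = γ·δ₁^p + (1−γ)·δ₂^p`, `γ ∈ (0,1)`).  A policy `π` achieves asymptotic
perfect detection for `M` — equivalently for `M^p`, i.e. the Bhattacharyya coefficient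
between `M₁^p` and `M₂^p` under `π` tends to `0` — if and only if
`P_I^π({h : inf(h) ∩ ISA^p ≠ ∅}) = 1`, where `P_I^π` is the measure on infinite histories
induced from `s_init` by `π` and `δ^I`. -/
theorem APD_iff_induced_measure_infOften_ISA
    {S A : Type} [Fintype S] [Fintype A] [DecidableEq S] [DecidableEq A]
    (act : S → Finset A) (hact : ∀ s, (act s).Nonempty) (init : S)
    (δ : Fin 2 → S → A → S → ℝ)
    (hδ0 : ∀ i s a s', 0 ≤ δ i s a s')
    (hδ1 : ∀ i s, ∀ a ∈ act s, ∑ s', δ i s a s' = 1)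
    (ra : S → A)
    (hra : ∀ s, RevealingState act δ s → ra s ∈ act s ∧ RevealingPair δ s (ra s))
    (γ : ℝ) (hγ0 : 0 < γ) (hγ1 : γ < 1)
    (π : Policy (S ⊕ Fin 2) (A ⊕ Fin 2) (actp act δ ra))
    (PI : MeasureTheory.Measure (Traj (S ⊕ Fin 2) (A ⊕ Fin 2)))
    (hPI : IsInduced (Sum.inl init)
      (fun sp ap s'p => γ * δp δ 0 sp ap s'p + (1 - γ) * δp δ 1 sp ap s'p) π.p PI) :
    Tendsto (fun t => BC (Sum.inl init) (δp δ 0) (δp δ 1) π.p t) atTop (nhds 0)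
      ↔ PI {ω | (InfOften ω ∩ ISAp act δ ra).Nonempty} = 1 := by
  obtain ⟨hprob, hcyl⟩ := hPI
  have hcyl' : ∀ (t : ℕ) (h : Hist (S ⊕ Fin 2) (A ⊕ Fin 2) t),
      PI (Cyl h) = ENNReal.ofReal (histProb (Sum.inl init) (dIKer δ γ) π.p t h) := hcyl
  constructor
  · intro ht
    by_contra hne
    exact nec_dir act δ ra hδ0 hγ0 hγ1 init π.p π.nonneg π.zero_off PI hprob hcyl'
      hne ht
  · intro hev
    exact suff_dir act δ ra hδ0 hδ1 hra hγ0 hγ1 init π.p π.nonneg π.sum_one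
      π.zero_off PI hprob hcyl' hev
end

section
/- Let M = {M_1, M_2} be a binary MMDP, M^p = {M_1^p, M_2^p} its preprocessed MMDP, and M^I any informative MDP of M. Let H_D = {h ∈ H : inf(h) ∩ ISA^p ≠ ∅}, where H is the space of infinite histories over the common state and action spaces of M^p. Then for any policy π: P_I^π(H_D) = 1 if and only if P_1^π(H_D) = 1, and P_I^π(H_D) = 1 if and only if P_2^π(H_D) = 1, where P_I^π, P_1^π and P_2^π are the probability measures on infinite histories induced from s_init by the policy π and the kernels δ^I, δ_1^p and δ_2^p respectively. -/
open Finset Filter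

section InducedAuxSection
open MeasureTheory
namespace InducedAux
open MeasureTheory Topology
set_option linter.unusedSectionVars false

variable {S A : Type} [Fintype S] [Fintype A] [DecidableEq S] [DecidableEq A]

/-- truncation of a trajectory to a finite history -/
def trunc (ω : Traj S A) (t : ℕ) : Hist S A t :=
  (fun i => (ω i.val).1, fun i => (ω i.val).2)

lemma mem_cyl_iff {t : ℕ} (h : Hist S A t) (ω : Traj S A) :
    ω ∈ Cyl h ↔ trunc ω t = h := by
  constructor
  · rintro ⟨h1, h2⟩
    exact Prod.ext (funext h1) (funext h2)
  · rintro rfl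
    exact ⟨fun i => rfl, fun i => rfl⟩

lemma measurableSet_eval (n : ℕ) (s : Set (S × A)) :
    MeasurableSet {ω : Traj S A | ω n ∈ s} := by
  have h : @Measurable (Traj S A) (S × A) _ ⊤ (fun ω => ω n) :=
    @measurable_pi_apply ℕ (fun _ => S × A) (fun _ => ⊤) n
  exact h trivial

lemma measurableSet_cyl {t : ℕ} (h : Hist S A t) : MeasurableSet (Cyl h) := by
  have heq : Cyl h = (⋂ i : Fin (t+1), {ω : Traj S A | ω i.val ∈ {p | p.1 = h.1 i}}) ∩
      (⋂ i : Fin t, {ω : Traj S A | ω i.val ∈ {p | p.2 = h.2 i}}) := by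
    ext ω
    simp only [Cyl, Set.mem_setOf_eq, Set.mem_inter_iff, Set.mem_iInter]
  rw [heq]
  exact (MeasurableSet.iInter fun i => measurableSet_eval _ _).inter
    (MeasurableSet.iInter fun i => measurableSet_eval _ _)

lemma cyl_disjoint {t : ℕ} {h h' : Hist S A t} (hne : h ≠ h') : Disjoint (Cyl h) (Cyl h') := by
  rw [Set.disjoint_left]
  intro ω hw hw'
  exact hne (((mem_cyl_iff h ω).1 hw).symm.trans ((mem_cyl_iff h' ω).1 hw'))

lemma setOf_trunc_eq (t : ℕ) (Q : Hist S A t → Prop) [DecidablePred Q] :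
    {ω : Traj S A | Q (trunc ω t)} = ⋃ h ∈ Finset.univ.filter Q, Cyl h := by
  ext ω
  simp only [Set.mem_iUnion, Set.mem_setOf_eq, Finset.mem_filter, Finset.mem_univ, true_and]
  constructor
  · intro hq; exact ⟨trunc ω t, hq, (mem_cyl_iff _ ω).2 rfl⟩
  · rintro ⟨h, hq, hw⟩; rwa [(mem_cyl_iff h ω).1 hw]

lemma measure_setOf_trunc (P : Measure (Traj S A)) (init : S) (e : S → A → S → ℝ)
    (πf : (t : ℕ) → Hist S A t → A → ℝ) (hP : IsInduced init e πf P)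
    (t : ℕ) (Q : Hist S A t → Prop) [DecidablePred Q] :
    P {ω | Q (trunc ω t)} =
      ∑ h ∈ Finset.univ.filter Q, ENNReal.ofReal (histProb init e πf t h) := by
  rw [setOf_trunc_eq]
  rw [measure_biUnion_finset (fun a _ b _ hab => cyl_disjoint hab)
    (fun h _ => measurableSet_cyl h)]
  exact Finset.sum_congr rfl fun h _ => hP.2 t h

lemma histProb_nonneg {init : S} {e : S → A → S → ℝ} {πf : (t : ℕ) → Hist S A t → A → ℝ}
    (he : ∀ s a s', 0 ≤ e s a s') (hπ : ∀ t h a, 0 ≤ πf t h a)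
    (t : ℕ) (h : Hist S A t) : 0 ≤ histProb init e πf t h := by
  unfold histProb
  refine mul_nonneg ?_ (Finset.prod_nonneg fun τ _ => mul_nonneg (hπ _ _ _) (he _ _ _))
  split_ifs <;> norm_num

lemma histProb_pos_elim {init : S} {e : S → A → S → ℝ} {πf : (t : ℕ) → Hist S A t → A → ℝ}
    (he : ∀ s a s', 0 ≤ e s a s') (hπ : ∀ t h a, 0 ≤ πf t h a)
    {t : ℕ} {h : Hist S A t} (hp : 0 < histProb init e πf t h) :
    h.1 0 = init ∧ ∀ τ : Fin t, 0 < πf τ.val (prefixH h τ) (h.2 τ) ∧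
      0 < e (h.1 τ.castSucc) (h.2 τ) (h.1 τ.succ) := by
  unfold histProb at hp
  have hinit : h.1 0 = init := by
    by_contra hne
    rw [if_neg hne, zero_mul] at hp
    exact lt_irrefl 0 hp
  refine ⟨hinit, fun τ => ?_⟩
  have hne : πf τ.val (prefixH h τ) (h.2 τ) * e (h.1 τ.castSucc) (h.2 τ) (h.1 τ.succ) ≠ 0 := by
    intro h0
    have hz : (∏ τ' : Fin t, πf τ'.val (prefixH h τ') (h.2 τ') *
        e (h.1 τ'.castSucc) (h.2 τ') (h.1 τ'.succ)) = 0 :=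
      Finset.prod_eq_zero (Finset.mem_univ τ) h0
    rw [hz, mul_zero] at hp
    exact lt_irrefl 0 hp
  rcases mul_ne_zero_iff.1 hne with ⟨h1, h2⟩
  exact ⟨(hπ _ _ _).lt_of_ne (Ne.symm h1), (he _ _ _).lt_of_ne (Ne.symm h2)⟩

lemma prod_le_pow_mul {M N : ℕ} {K : ℝ} (hK : 1 ≤ K) (u v : Fin M → ℝ)
    (hu : ∀ τ, 0 ≤ u τ) (hv : ∀ τ, 0 ≤ v τ)
    (h1 : ∀ τ : Fin M, τ.val < N → u τ ≤ K * v τ)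
    (h2 : ∀ τ : Fin M, N ≤ τ.val → u τ ≤ v τ) :
    ∏ τ, u τ ≤ K ^ N * ∏ τ, v τ := by
  classical
  have step1 : ∏ τ, u τ ≤ ∏ τ, ((if τ.val < N then K else 1) * v τ) := by
    apply Finset.prod_le_prod (fun τ _ => hu τ)
    intro τ _
    split_ifs with hτ
    · exact h1 τ hτ
    · simpa using h2 τ (not_lt.1 hτ)
  refine step1.trans ?_
  rw [Finset.prod_mul_distrib]
  apply mul_le_mul_of_nonneg_right ?_ (Finset.prod_nonneg fun τ _ => hv τ)
  rw [Finset.prod_ite, Finset.prod_const, Finset.prod_const, one_pow, mul_one]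
  have hcard : (Finset.univ.filter (fun τ : Fin M => τ.val < N)).card ≤ N := by
    have h1 : (Finset.univ.filter (fun τ : Fin M => τ.val < N)).card ≤ (Finset.range N).card :=
      Finset.card_le_card_of_injOn (fun τ : Fin M => τ.val)
        (fun a ha => Finset.mem_range.2 (by simpa using (Finset.mem_filter.1 ha).2))
        (fun a _ b _ hab => Fin.val_injective hab)
    simpa using h1
  exact pow_le_pow_right₀ hK hcard

lemma infinite_iff (P : ℕ → Prop) : {n | P n}.Infinite ↔ ∀ N, ∃ n, N ≤ n ∧ P n := by
  constructor
  · intro h N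
    obtain ⟨n, hn, hn2⟩ := h.exists_gt N
    exact ⟨n, le_of_lt hn2, hn⟩
  · intro h hfin
    obtain ⟨b, hb⟩ := hfin.bddAbove
    obtain ⟨n, hn1, hn2⟩ := h (b + 1)
    have := hb hn2
    omega

section Kernels
open scoped Classical

variable (act : S → Finset A) (δ : Fin 2 → S → A → S → ℝ) (ra : S → A)

/-- The set of "plain" pairs of the preprocessed MMDP: available, at a non-terminal state,
with identical transition kernels in both preprocessed MDPs. -/
def Gset : Set ((S ⊕ Fin 2) × (A ⊕ Fin 2)) :=
  {x | x.2 ∈ actp act δ ra x.1 ∧ (∃ s, x.1 = Sum.inl s) ∧ δp δ 0 x.1 x.2 = δp δ 1 x.1 x.2}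

variable {act δ ra}

lemma δp_inr (i j : Fin 2) (a : A ⊕ Fin 2) (s' : S ⊕ Fin 2) :
    δp δ i (Sum.inr j) a s' = if s' = Sum.inr j then 1 else 0 := by
  cases a <;> rfl

lemma δp_inl_inr_act (i : Fin 2) (s : S) (k : Fin 2) (s' : S ⊕ Fin 2) :
    δp δ i (Sum.inl s) (Sum.inr k) s' = 0 := rfl

lemma δp_rev_inl (i : Fin 2) {s : S} {a : A} (hrev : RevealingPair δ s a) (s' : S) :
    δp δ i (Sum.inl s) (Sum.inl a) (Sum.inl s') = 0 := by
  simp [δp, hrev]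

lemma δp_rev_inr (i : Fin 2) {s : S} {a : A} (hrev : RevealingPair δ s a) (j : Fin 2) :
    δp δ i (Sum.inl s) (Sum.inl a) (Sum.inr j) = if j = i then 1 else 0 := by
  simp [δp, hrev]

lemma δp_inf_inl (i : Fin 2) {s : S} {a : A} (hrev : ¬ RevealingPair δ s a)
    (hinf : InformativePair δ s a) (s' : S) :
    δp δ i (Sum.inl s) (Sum.inl a) (Sum.inl s') =
      if 0 < δ (1 - i) s a s' then δ i s a s' else 0 := by
  simp [δp, hrev, hinf]

lemma δp_inf_inr (i : Fin 2) {s : S} {a : A} (hrev : ¬ RevealingPair δ s a)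
    (hinf : InformativePair δ s a) (j : Fin 2) :
    δp δ i (Sum.inl s) (Sum.inl a) (Sum.inr j) =
      if j = i then
        ∑ s' ∈ Finset.univ.filter (fun s' : S => ¬ 0 < δ (1 - i) s a s'), δ i s a s'
      else 0 := by
  simp [δp, hrev, hinf]

lemma δp_plain_inl (i : Fin 2) {s : S} {a : A} (hrev : ¬ RevealingPair δ s a)
    (hinf : ¬ InformativePair δ s a) (s' : S) :
    δp δ i (Sum.inl s) (Sum.inl a) (Sum.inl s') = δ i s a s' := by
  simp [δp, hrev, hinf]

lemma δp_plain_inr (i : Fin 2) {s : S} {a : A} (hrev : ¬ RevealingPair δ s a)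
    (hinf : ¬ InformativePair δ s a) (j : Fin 2) :
    δp δ i (Sum.inl s) (Sum.inl a) (Sum.inr j) = 0 := by
  simp [δp, hrev, hinf]

lemma not_rev_not_inf_eq {s : S} {a : A} (hrev : ¬ RevealingPair δ s a)
    (hinf : ¬ InformativePair δ s a) : δ 0 s a = δ 1 s a := by
  unfold RevealingPair at hrev
  push_neg at hrev
  obtain ⟨s', hs'⟩ := hrev
  by_contra hne
  exact hinf ⟨hne, s', hs'.1, hs'.2⟩

lemma δp_nonneg (hδ : ∀ i s a s', 0 ≤ δ i s a s') (i : Fin 2) :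
    ∀ x a s', 0 ≤ δp δ i x a s' := by
  rintro (s | j) (a | k) s'
  · rcases s' with s' | j'
    · by_cases hrev : RevealingPair δ s a
      · rw [δp_rev_inl i hrev]
      · by_cases hinf : InformativePair δ s a
        · rw [δp_inf_inl i hrev hinf]
          split_ifs
          · exact hδ i s a s'
          · exact le_refl 0
        · rw [δp_plain_inl i hrev hinf]
          exact hδ i s a s'
    · by_cases hrev : RevealingPair δ s a
      · rw [δp_rev_inr i hrev]
        split_ifs <;> norm_num
      · by_cases hinf : InformativePair δ s a
        · rw [δp_inf_inr i hrev hinf]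
          split_ifs
          · exact Finset.sum_nonneg fun s'' _ => hδ i s a s''
          · exact le_refl 0
        · rw [δp_plain_inr i hrev hinf]
  · rw [δp_inl_inr_act]
  · rw [δp_inr]
    split_ifs <;> norm_num
  · rw [δp_inr]
    split_ifs <;> norm_num

lemma one_sub_zero : (1 - 0 : Fin 2) = 1 := rfl
lemma one_sub_one : (1 - 1 : Fin 2) = 0 := rfl

lemma δp_inl_pos_iff (hδ : ∀ i s a s', 0 ≤ δ i s a s') (s s' : S) (a : A) :
    (0 < δp δ 0 (Sum.inl s) (Sum.inl a) (Sum.inl s') ↔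
      0 < δp δ 1 (Sum.inl s) (Sum.inl a) (Sum.inl s')) := by
  by_cases hrev : RevealingPair δ s a
  · rw [δp_rev_inl 0 hrev, δp_rev_inl 1 hrev]
  by_cases hinf : InformativePair δ s a
  · rw [δp_inf_inl 0 hrev hinf, δp_inf_inl 1 hrev hinf, one_sub_zero, one_sub_one]
    constructor
    · intro h
      split_ifs at h with h1
      · rw [if_pos h]; exact h1
      · exact absurd h (lt_irrefl 0)
    · intro h
      split_ifs at h with h1
      · rw [if_pos h]; exact h1
      · exact absurd h (lt_irrefl 0)
  · rw [δp_plain_inl 0 hrev hinf, δp_plain_inl 1 hrev hinf, not_rev_not_inf_eq hrev hinf]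

lemma informative_lift (hδ : ∀ i s a s', 0 ≤ δ i s a s') {s : S} {a : A}
    (hrev : ¬ RevealingPair δ s a) (hinf : InformativePair δ s a) :
    InformativePair (fun i => δp δ i) (Sum.inl s) (Sum.inl a) := by
  obtain ⟨hne, s0, h0, h1⟩ := hinf
  have hinf' : InformativePair δ s a := ⟨hne, s0, h0, h1⟩
  refine ⟨?_, Sum.inl s0, ?_, ?_⟩
  · intro heq0
    apply hne
    have heq : δp δ 0 (Sum.inl s) (Sum.inl a) = δp δ 1 (Sum.inl s) (Sum.inl a) := heq0
    have hbot0 := congrFun heq (Sum.inr 0)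
    rw [δp_inf_inr 0 hrev hinf' 0, δp_inf_inr 1 hrev hinf' 0, one_sub_zero, one_sub_one,
      if_pos rfl, if_neg (by decide)] at hbot0
    have hz0 : ∀ s' ∈ Finset.univ.filter (fun s' : S => ¬ 0 < δ 1 s a s'), δ 0 s a s' = 0 :=
      (Finset.sum_eq_zero_iff_of_nonneg (fun s' _ => hδ 0 s a s')).1 hbot0
    have hbot1 := congrFun heq (Sum.inr 1)
    rw [δp_inf_inr 0 hrev hinf' 1, δp_inf_inr 1 hrev hinf' 1, one_sub_zero, one_sub_one,
      if_neg (by decide), if_pos rfl] at hbot1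
    have hz1 : ∀ s' ∈ Finset.univ.filter (fun s' : S => ¬ 0 < δ 0 s a s'), δ 1 s a s' = 0 :=
      (Finset.sum_eq_zero_iff_of_nonneg (fun s' _ => hδ 1 s a s')).1 hbot1.symm
    funext s'
    have hinl := congrFun heq (Sum.inl s')
    rw [δp_inf_inl 0 hrev hinf' s', δp_inf_inl 1 hrev hinf' s', one_sub_zero, one_sub_one]
      at hinl
    by_cases ha1 : 0 < δ 1 s a s'
    · by_cases ha0 : 0 < δ 0 s a s'
      · rwa [if_pos ha1, if_pos ha0] at hinl
      · have := hz1 s' (Finset.mem_filter.2 ⟨Finset.mem_univ _, ha0⟩)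
        exact absurd (this ▸ ha1) (lt_irrefl 0)
    · have e0 : δ 0 s a s' = 0 := hz0 s' (Finset.mem_filter.2 ⟨Finset.mem_univ _, ha1⟩)
      have e1 : δ 1 s a s' = 0 := le_antisymm (not_lt.1 ha1) (hδ 1 s a s')
      rw [e0, e1]
  · show 0 < δp δ 0 (Sum.inl s) (Sum.inl a) (Sum.inl s0)
    rw [δp_inf_inl 0 hrev hinf' s0, one_sub_zero, if_pos h1]; exact h0
  · show 0 < δp δ 1 (Sum.inl s) (Sum.inl a) (Sum.inl s0)
    rw [δp_inf_inl 1 hrev hinf' s0, one_sub_one, if_pos h0]; exact h1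

lemma δp0_eq_δp1_of_plain (s : S) (a : A) (hrev : ¬ RevealingPair δ s a)
    (hinf : ¬ InformativePair δ s a) :
    δp δ 0 (Sum.inl s) (Sum.inl a) = δp δ 1 (Sum.inl s) (Sum.inl a) := by
  funext s'
  rcases s' with s' | j
  · rw [δp_plain_inl 0 hrev hinf, δp_plain_inl 1 hrev hinf, not_rev_not_inf_eq hrev hinf]
  · rw [δp_plain_inr 0 hrev hinf, δp_plain_inr 1 hrev hinf]

lemma classify (hδ : ∀ i s a s', 0 ≤ δ i s a s')
    (hra : ∀ s, RevealingState act δ s → ra s ∈ act s ∧ RevealingPair δ s (ra s))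
    {s : S} {b : A ⊕ Fin 2}
    (hav : b ∈ actp act δ ra (Sum.inl s))
    (hni : (Sum.inl s, b) ∉ ISAp act δ ra) :
    ((Sum.inl s, b) ∈ Gset act δ ra) ∨ ∃ a : A, b = Sum.inl a ∧ RevealingPair δ s a := by
  have hav' := hav
  rw [show actp act δ ra (Sum.inl s) =
    (if RevealingState act δ s then {Sum.inl (ra s)} else (act s).image Sum.inl) from rfl]
    at hav'
  by_cases hrs : RevealingState act δ s
  · rw [if_pos hrs] at hav'
    right
    exact ⟨ra s, by simpa using hav', (hra s hrs).2⟩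
  · rw [if_neg hrs] at hav'
    obtain ⟨a, _, rfl⟩ := Finset.mem_image.1 hav'
    by_cases hrev : RevealingPair δ s a
    · right; exact ⟨a, rfl, hrev⟩
    by_cases hinf : InformativePair δ s a
    · exact absurd (Or.inl ⟨hav, informative_lift hδ hrev hinf⟩) hni
    · left
      exact ⟨hav, ⟨s, rfl⟩, δp0_eq_δp1_of_plain s a hrev hinf⟩

lemma Gset_disjoint_ISAp {x : (S ⊕ Fin 2) × (A ⊕ Fin 2)} (hx : x ∈ Gset act δ ra) :
    x ∉ ISAp act δ ra := by
  obtain ⟨hav, ⟨s, hx1⟩, heq⟩ := hx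
  rintro (⟨_, hne, _⟩ | ⟨j, hj⟩)
  · exact hne heq
  · rw [hj] at hx1; cases hx1

end Kernels

section Main
open scoped Classical

variable {act : S → Finset A} {δ : Fin 2 → S → A → S → ℝ} {ra : S → A}

lemma dI_pos_elim {γ : ℝ} (hδ : ∀ i s a s', 0 ≤ δ i s a s') (hγ0 : 0 < γ) (hγ1 : γ < 1)
    {x : S ⊕ Fin 2} {a : A ⊕ Fin 2} {s' : S ⊕ Fin 2}
    (h : 0 < γ * δp δ 0 x a s' + (1 - γ) * δp δ 1 x a s') :
    0 < δp δ 0 x a s' ∨ 0 < δp δ 1 x a s' := by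
  by_contra hc
  push_neg at hc
  have h0 : δp δ 0 x a s' = 0 := le_antisymm hc.1 (δp_nonneg hδ 0 x a s')
  have h1 : δp δ 1 x a s' = 0 := le_antisymm hc.2 (δp_nonneg hδ 1 x a s')
  rw [h0, h1] at h
  simp at h

lemma absorb_δp {i j : Fin 2} {a : A ⊕ Fin 2} {s' : S ⊕ Fin 2}
    (h : 0 < δp δ i (Sum.inr j) a s') : s' = Sum.inr j := by
  rw [δp_inr] at h
  split_ifs at h with hc
  · exact hc
  · exact absurd h (lt_irrefl 0)

lemma absorb_dI {γ : ℝ} (hδ : ∀ i s a s', 0 ≤ δ i s a s') (hγ0 : 0 < γ) (hγ1 : γ < 1)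
    {j : Fin 2} {a : A ⊕ Fin 2} {s' : S ⊕ Fin 2}
    (h : 0 < γ * δp δ 0 (Sum.inr j) a s' + (1 - γ) * δp δ 1 (Sum.inr j) a s') :
    s' = Sum.inr j := by
  rcases dI_pos_elim hδ hγ0 hγ1 h with h' | h' <;> exact absorb_δp h'

lemma revtgt_δp {i : Fin 2} {s : S} {a : A} {s' : S ⊕ Fin 2}
    (hrev : RevealingPair δ s a) (h : 0 < δp δ i (Sum.inl s) (Sum.inl a) s') :
    ∃ j, s' = Sum.inr j := by
  rcases s' with s' | j
  · rw [δp_rev_inl i hrev] at h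
    exact absurd h (lt_irrefl 0)
  · exact ⟨j, rfl⟩

lemma revtgt_dI {γ : ℝ} (hδ : ∀ i s a s', 0 ≤ δ i s a s') (hγ0 : 0 < γ) (hγ1 : γ < 1)
    {s : S} {a : A} {s' : S ⊕ Fin 2} (hrev : RevealingPair δ s a)
    (h : 0 < γ * δp δ 0 (Sum.inl s) (Sum.inl a) s' + (1 - γ) * δp δ 1 (Sum.inl s) (Sum.inl a) s') :
    ∃ j, s' = Sum.inr j := by
  rcases dI_pos_elim hδ hγ0 hγ1 h with h' | h' <;> exact revtgt_δp hrev h'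

lemma dI_pos_inl {γ : ℝ} (hδ : ∀ i s a s', 0 ≤ δ i s a s') (hγ0 : 0 < γ) (hγ1 : γ < 1)
    {s : S} {a : A ⊕ Fin 2} {s' : S}
    (h : 0 < γ * δp δ 0 (Sum.inl s) a (Sum.inl s') + (1 - γ) * δp δ 1 (Sum.inl s) a (Sum.inl s')) :
    0 < δp δ 0 (Sum.inl s) a (Sum.inl s') ∧ 0 < δp δ 1 (Sum.inl s) a (Sum.inl s') := by
  rcases a with a | k
  · rcases dI_pos_elim hδ hγ0 hγ1 h with h' | h'
    · exact ⟨h', (δp_inl_pos_iff hδ s s' a).1 h'⟩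
    · exact ⟨(δp_inl_pos_iff hδ s s' a).2 h', h'⟩
  · rw [δp_inl_inr_act, δp_inl_inr_act] at h
    simp at h

/-- `(s,a)`-pairs of the trajectory eventually in `Gset` from time `N` on. -/
def Fset (act : S → Finset A) (δ : Fin 2 → S → A → S → ℝ) (ra : S → A) (N : ℕ) :
    Set (Traj (S ⊕ Fin 2) (A ⊕ Fin 2)) :=
  {ω | ∀ n, N ≤ n → ω n ∈ Gset act δ ra}

/-- finite-horizon version -/
def FsetM (act : S → Finset A) (δ : Fin 2 → S → A → S → ℝ) (ra : S → A) (N M : ℕ) :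
    Set (Traj (S ⊕ Fin 2) (A ⊕ Fin 2)) :=
  {ω | ∀ n, N ≤ n → n < M → ω n ∈ Gset act δ ra}

lemma Fset_eq_iInter (N : ℕ) :
    Fset act δ ra N = ⋂ m : ℕ, FsetM act δ ra N (N + 1 + m) := by
  ext ω
  simp only [Fset, FsetM, Set.mem_setOf_eq, Set.mem_iInter]
  constructor
  · intro h m n hn _
    exact h n hn
  · intro h n hn
    exact h n n hn (by omega)

lemma measurableSet_FsetM (N M : ℕ) : MeasurableSet (FsetM act δ ra N M) := by
  have heq : FsetM act δ ra N M =
      ⋂ n : ℕ, {ω : Traj (S ⊕ Fin 2) (A ⊕ Fin 2) | N ≤ n → n < M → ω n ∈ Gset act δ ra} := by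
    ext ω
    simp [FsetM, Set.mem_iInter]
  rw [heq]
  refine MeasurableSet.iInter fun n => ?_
  by_cases hn : N ≤ n ∧ n < M
  · have : {ω : Traj (S ⊕ Fin 2) (A ⊕ Fin 2) | N ≤ n → n < M → ω n ∈ Gset act δ ra} =
        {ω | ω n ∈ Gset act δ ra} := by
      ext ω; simp [hn.1, hn.2]
    rw [this]
    exact measurableSet_eval n _
  · have : {ω : Traj (S ⊕ Fin 2) (A ⊕ Fin 2) | N ≤ n → n < M → ω n ∈ Gset act δ ra} =
        Set.univ := by
      ext ω
      simp only [Set.mem_setOf_eq, Set.mem_univ, iff_true]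
      intro h1 h2
      exact absurd ⟨h1, h2⟩ hn
    rw [this]
    exact MeasurableSet.univ

lemma measurableSet_Fset (N : ℕ) : MeasurableSet (Fset act δ ra N) := by
  rw [Fset_eq_iInter]
  exact MeasurableSet.iInter fun m => measurableSet_FsetM N _

lemma antitone_FsetM (N : ℕ) : Antitone (fun m => FsetM act δ ra N (N + 1 + m)) := by
  intro m m' hm ω hω n hn hnM
  exact hω n hn (by omega)

/-- `FsetM` as a constraint on the truncated history. -/
lemma FsetM_eq_setOf_trunc (N M : ℕ) :
    FsetM act δ ra N M = {ω | ∀ n : Fin M, N ≤ n.val →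
      ((trunc ω M).1 n.castSucc, (trunc ω M).2 n) ∈ Gset act δ ra} := by
  ext ω
  simp only [FsetM, Set.mem_setOf_eq]
  constructor
  · intro h n hn
    have := h n.val hn n.isLt
    simpa [trunc] using this
  · intro h n hn hnM
    have := h ⟨n, hnM⟩ hn
    simpa [trunc] using this

/-- Absorption of histories: positive-probability histories stay at `⊥ⱼ` forever. -/
lemma hist_absorb {e : (S ⊕ Fin 2) → (A ⊕ Fin 2) → (S ⊕ Fin 2) → ℝ}
    (habs : ∀ (j : Fin 2) a s', 0 < e (Sum.inr j) a s' → s' = Sum.inr j)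
    {M : ℕ} {h : Hist (S ⊕ Fin 2) (A ⊕ Fin 2) M}
    (hfac : ∀ n (hn : n < M), 0 < e (h.1 ⟨n, by omega⟩) (h.2 ⟨n, hn⟩) (h.1 ⟨n + 1, by omega⟩))
    {j : Fin 2} {k : ℕ} (hkM : k ≤ M) (hk : h.1 ⟨k, by omega⟩ = Sum.inr j) :
    ∀ m, k ≤ m → (hm : m ≤ M) → h.1 ⟨m, by omega⟩ = Sum.inr j := by
  intro m
  induction m with
  | zero =>
    intro h0 _
    have hk0 : k = 0 := Nat.le_zero.1 h0
    subst hk0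
    exact hk
  | succ m ih =>
    intro hkm hmM
    by_cases hc : k ≤ m
    · have hm' := ih hc (by omega)
      have hτ := hfac m (by omega)
      rw [hm'] at hτ
      exact habs _ _ _ hτ
    · have : k = m + 1 := by omega
      subst this
      exact hk

/-- The constraint on a finite history corresponding to `FsetM`. -/
def QG (act : S → Finset A) (δ : Fin 2 → S → A → S → ℝ) (ra : S → A) (N M : ℕ)
    (h : Hist (S ⊕ Fin 2) (A ⊕ Fin 2) M) : Prop :=
  ∀ n : Fin M, N ≤ n.val → (h.1 n.castSucc, h.2 n) ∈ Gset act δ ra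

lemma FsetM_eq_QG (N M : ℕ) :
    FsetM act δ ra N M = {ω | QG act δ ra N M (trunc ω M)} := by
  rw [FsetM_eq_setOf_trunc]
  rfl

/-- Core per-history inequality. -/
lemma histProb_le_of_QG
    {e f : (S ⊕ Fin 2) → (A ⊕ Fin 2) → (S ⊕ Fin 2) → ℝ}
    {πf : (t : ℕ) → Hist (S ⊕ Fin 2) (A ⊕ Fin 2) t → (A ⊕ Fin 2) → ℝ}
    (he : ∀ x a s', 0 ≤ e x a s') (hf : ∀ x a s', 0 ≤ f x a s')
    (hπ : ∀ t h a, 0 ≤ πf t h a)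
    (habs : ∀ (j : Fin 2) a s', 0 < e (Sum.inr j) a s' → s' = Sum.inr j)
    (hG : ∀ x ∈ Gset act δ ra, e x.1 x.2 = f x.1 x.2)
    {K : ℝ} (hK : 1 ≤ K)
    (hKf : ∀ s a s', 0 < e (Sum.inl s) a (Sum.inl s') →
      e (Sum.inl s) a (Sum.inl s') ≤ K * f (Sum.inl s) a (Sum.inl s'))
    (init' : S ⊕ Fin 2) {N M : ℕ} (hNM : N < M)
    (h : Hist (S ⊕ Fin 2) (A ⊕ Fin 2) M) (hQ : QG act δ ra N M h) :
    histProb init' e πf M h ≤ K ^ N * histProb init' f πf M h := by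
  by_cases hpos : 0 < histProb init' e πf M h
  swap
  · have h0 : histProb init' e πf M h = 0 :=
      le_antisymm (not_lt.1 hpos) (histProb_nonneg he hπ M h)
    rw [h0]
    exact mul_nonneg (pow_nonneg (le_trans zero_le_one hK) N) (histProb_nonneg hf hπ M h)
  obtain ⟨hinit, hfac⟩ := histProb_pos_elim he hπ hpos
  have hfac' : ∀ n (hn : n < M),
      0 < e (h.1 ⟨n, by omega⟩) (h.2 ⟨n, hn⟩) (h.1 ⟨n + 1, by omega⟩) := by
    intro n hn
    exact (hfac ⟨n, hn⟩).2
  have hstate : ∀ k (hk : k ≤ N) (j : Fin 2), h.1 ⟨k, by omega⟩ ≠ Sum.inr j := by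
    intro k hk j hj
    have hN : h.1 ⟨N, by omega⟩ = Sum.inr j :=
      hist_absorb habs hfac' (by omega) hj N hk (by omega)
    obtain ⟨-, ⟨s, hs⟩, -⟩ := hQ ⟨N, hNM⟩ le_rfl
    have hs' : h.1 ⟨N, by omega⟩ = Sum.inl s := hs
    rw [hN] at hs'
    cases hs'
  unfold histProb
  rw [if_pos hinit, one_mul, one_mul]
  refine prod_le_pow_mul hK _ _
    (fun τ => mul_nonneg (hπ _ _ _) (he _ _ _))
    (fun τ => mul_nonneg (hπ _ _ _) (hf _ _ _)) ?_ ?_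
  · intro τ hτ
    have hepos : 0 < e (h.1 τ.castSucc) (h.2 τ) (h.1 τ.succ) := (hfac τ).2
    obtain ⟨s, hs⟩ : ∃ s, h.1 τ.castSucc = Sum.inl s := by
      rcases hx : h.1 τ.castSucc with s | j
      · exact ⟨s, rfl⟩
      · exact absurd (hx : h.1 ⟨τ.val, by omega⟩ = Sum.inr j) (hstate τ.val (by omega) j)
    obtain ⟨s', hs'⟩ : ∃ s', h.1 τ.succ = Sum.inl s' := by
      rcases hx : h.1 τ.succ with s' | j
      · exact ⟨s', rfl⟩
      · exact absurd (hx : h.1 ⟨τ.val + 1, by omega⟩ = Sum.inr j)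
          (hstate (τ.val + 1) (by omega) j)
    rw [hs, hs'] at hepos ⊢
    calc πf τ.val (prefixH h τ) (h.2 τ) * e (Sum.inl s) (h.2 τ) (Sum.inl s')
        ≤ πf τ.val (prefixH h τ) (h.2 τ) * (K * f (Sum.inl s) (h.2 τ) (Sum.inl s')) :=
          mul_le_mul_of_nonneg_left (hKf s (h.2 τ) s' hepos) (hπ _ _ _)
      _ = K * (πf τ.val (prefixH h τ) (h.2 τ) * f (Sum.inl s) (h.2 τ) (Sum.inl s')) := by ring
  · intro τ hτ
    have heq := congrFun (hG _ (hQ τ hτ)) (h.1 τ.succ)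
    exact le_of_eq (by rw [heq])

/-- Comparison of the induced measures on the tail sets `Fset`. -/
lemma measure_Fset_null
    {e f : (S ⊕ Fin 2) → (A ⊕ Fin 2) → (S ⊕ Fin 2) → ℝ}
    {πf : (t : ℕ) → Hist (S ⊕ Fin 2) (A ⊕ Fin 2) t → (A ⊕ Fin 2) → ℝ}
    (he : ∀ x a s', 0 ≤ e x a s') (hf : ∀ x a s', 0 ≤ f x a s')
    (hπ : ∀ t h a, 0 ≤ πf t h a)
    (habs : ∀ (j : Fin 2) a s', 0 < e (Sum.inr j) a s' → s' = Sum.inr j)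
    (hG : ∀ x ∈ Gset act δ ra, e x.1 x.2 = f x.1 x.2)
    {K : ℝ} (hK : 1 ≤ K)
    (hKf : ∀ s a s', 0 < e (Sum.inl s) a (Sum.inl s') →
      e (Sum.inl s) a (Sum.inl s') ≤ K * f (Sum.inl s) a (Sum.inl s'))
    (init' : S ⊕ Fin 2) {Pe Pf : Measure (Traj (S ⊕ Fin 2) (A ⊕ Fin 2))}
    (hPe : IsInduced init' e πf Pe) (hPf : IsInduced init' f πf Pf)
    (N : ℕ) (hnull : Pf (Fset act δ ra N) = 0) : Pe (Fset act δ ra N) = 0 := by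
  haveI := hPf.1
  have hKN : (0 : ℝ) ≤ K ^ N := pow_nonneg (le_trans zero_le_one hK) N
  have key : ∀ m : ℕ, Pe (Fset act δ ra N) ≤
      ENNReal.ofReal (K ^ N) * Pf (FsetM act δ ra N (N + 1 + m)) := by
    intro m
    have hNM : N < N + 1 + m := by omega
    have hsub : Fset act δ ra N ⊆ FsetM act δ ra N (N + 1 + m) := by
      rw [Fset_eq_iInter]
      exact Set.iInter_subset _ m
    refine le_trans (measure_mono hsub) ?_
    calc Pe (FsetM act δ ra N (N + 1 + m))
        = ∑ h ∈ Finset.univ.filter (QG act δ ra N (N + 1 + m)),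
            ENNReal.ofReal (histProb init' e πf (N + 1 + m) h) := by
          rw [FsetM_eq_QG, measure_setOf_trunc Pe init' e πf hPe _ (QG act δ ra N (N + 1 + m))]
      _ ≤ ∑ h ∈ Finset.univ.filter (QG act δ ra N (N + 1 + m)),
            ENNReal.ofReal (K ^ N * histProb init' f πf (N + 1 + m) h) :=
          Finset.sum_le_sum fun h hh => ENNReal.ofReal_le_ofReal
            (histProb_le_of_QG he hf hπ habs hG hK hKf init' hNM h
              (Finset.mem_filter.1 hh).2)
      _ = ∑ h ∈ Finset.univ.filter (QG act δ ra N (N + 1 + m)),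
            ENNReal.ofReal (K ^ N) * ENNReal.ofReal (histProb init' f πf (N + 1 + m) h) :=
          Finset.sum_congr rfl fun h _ => ENNReal.ofReal_mul hKN
      _ = ENNReal.ofReal (K ^ N) * ∑ h ∈ Finset.univ.filter (QG act δ ra N (N + 1 + m)),
            ENNReal.ofReal (histProb init' f πf (N + 1 + m) h) := by
          rw [Finset.mul_sum]
      _ = ENNReal.ofReal (K ^ N) * Pf (FsetM act δ ra N (N + 1 + m)) := by
          rw [FsetM_eq_QG, measure_setOf_trunc Pf init' f πf hPf _ (QG act δ ra N (N + 1 + m))]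
  have htend : Tendsto (fun m => Pf (FsetM act δ ra N (N + 1 + m))) atTop
      (𝓝 (Pf (Fset act δ ra N))) := by
    rw [Fset_eq_iInter]
    exact tendsto_measure_iInter_atTop (fun m => (measurableSet_FsetM _ _).nullMeasurableSet)
      (antitone_FsetM N) ⟨0, measure_ne_top _ _⟩
  rw [hnull] at htend
  have htend2 : Tendsto (fun m => ENNReal.ofReal (K ^ N) * Pf (FsetM act δ ra N (N + 1 + m)))
      atTop (𝓝 0) := by
    have := ENNReal.Tendsto.const_mul (a := ENNReal.ofReal (K ^ N)) htend (Or.inr ENNReal.ofReal_ne_top)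
    simpa using this
  exact le_zero_iff.1 (ge_of_tendsto' htend2 key)

/-- Trajectories all whose finite prefixes have positive probability. -/
def GoodSet (init : S ⊕ Fin 2) (e : (S ⊕ Fin 2) → (A ⊕ Fin 2) → (S ⊕ Fin 2) → ℝ)
    (πf : (t : ℕ) → Hist (S ⊕ Fin 2) (A ⊕ Fin 2) t → (A ⊕ Fin 2) → ℝ) :
    Set (Traj (S ⊕ Fin 2) (A ⊕ Fin 2)) :=
  {ω | ∀ t, 0 < histProb init e πf t (trunc ω t)}

lemma measure_goodSet_compl {init : S ⊕ Fin 2}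
    {e : (S ⊕ Fin 2) → (A ⊕ Fin 2) → (S ⊕ Fin 2) → ℝ}
    {πf : (t : ℕ) → Hist (S ⊕ Fin 2) (A ⊕ Fin 2) t → (A ⊕ Fin 2) → ℝ}
    {P : Measure (Traj (S ⊕ Fin 2) (A ⊕ Fin 2))}
    (hP : IsInduced init e πf P)
    (he : ∀ x a s', 0 ≤ e x a s') (hπ : ∀ t h a, 0 ≤ πf t h a) :
    P (GoodSet init e πf)ᶜ = 0 := by
  have hsub : (GoodSet init e πf)ᶜ ⊆
      ⋃ t : ℕ, {ω | ¬ 0 < histProb init e πf t (trunc ω t)} := by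
    intro ω hω
    simp only [GoodSet, Set.mem_compl_iff, Set.mem_setOf_eq, not_forall] at hω
    obtain ⟨t, ht⟩ := hω
    exact Set.mem_iUnion.2 ⟨t, ht⟩
  refine measure_mono_null hsub (measure_iUnion_null fun t => ?_)
  rw [measure_setOf_trunc P init e πf hP t (fun h => ¬ 0 < histProb init e πf t h)]
  refine Finset.sum_eq_zero fun h hh => ?_
  exact ENNReal.ofReal_eq_zero.2 (not_lt.1 (Finset.mem_filter.1 hh).2)

lemma actp_inr_eq (j : Fin 2) : actp act δ ra (Sum.inr j) = {Sum.inr j} := rfl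

/-- A.s.-style pointwise lemma: on good trajectories avoiding `ISAp` infinitely often,
eventually only `Gset` pairs occur. -/
lemma good_eventually_G
    {e : (S ⊕ Fin 2) → (A ⊕ Fin 2) → (S ⊕ Fin 2) → ℝ}
    (he : ∀ x a s', 0 ≤ e x a s')
    (hrevtgt : ∀ s a s', RevealingPair δ s a →
      0 < e (Sum.inl s) (Sum.inl a) s' → ∃ j, s' = Sum.inr j)
    (hδ : ∀ i s a s', 0 ≤ δ i s a s')
    (hra : ∀ s, RevealingState act δ s → ra s ∈ act s ∧ RevealingPair δ s (ra s))
    (π : Policy (S ⊕ Fin 2) (A ⊕ Fin 2) (actp act δ ra)) (init' : S ⊕ Fin 2)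
    {ω : Traj (S ⊕ Fin 2) (A ⊕ Fin 2)} (hgood : ω ∈ GoodSet init' e π.p)
    (hHD : ¬ (InfOften ω ∩ ISAp act δ ra).Nonempty) :
    ∃ N, ω ∈ Fset act δ ra N := by
  have hfac : ∀ n, (ω n).2 ∈ actp act δ ra ((ω n).1) ∧
      0 < e ((ω n).1) ((ω n).2) ((ω (n + 1)).1) := by
    intro n
    have hp := hgood (n + 1)
    obtain ⟨-, hfacs⟩ := histProb_pos_elim he (fun t h a => π.nonneg t h a) hp
    have h1 := hfacs ⟨n, Nat.lt_succ_self n⟩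
    constructor
    · by_contra hnot
      have h0 : π.p n (trunc ω n) ((ω n).2) = 0 := π.zero_off n (trunc ω n) ((ω n).2) hnot
      have hππ : 0 < π.p n (trunc ω n) ((ω n).2) := h1.1
      rw [h0] at hππ
      exact lt_irrefl 0 hππ
    · exact h1.2
  rw [Set.not_nonempty_iff_eq_empty] at hHD
  have hocc : {n : ℕ | ω n ∈ ISAp act δ ra}.Finite := by
    have hsub : {n | ω n ∈ ISAp act δ ra} ⊆ ⋃ p ∈ ISAp act δ ra, {n | ω n = p} := by
      intro n hn
      exact Set.mem_biUnion hn rfl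
    refine Set.Finite.subset (Set.Finite.biUnion (Set.toFinite _) fun p hp => ?_) hsub
    by_contra hinf
    have hmem : p ∈ InfOften ω ∩ ISAp act δ ra := ⟨hinf, hp⟩
    rw [hHD] at hmem
    exact absurd hmem (Set.notMem_empty p)
  obtain ⟨b, hb⟩ := hocc.bddAbove
  refine ⟨b + 1, ?_⟩
  have hnotISA : ∀ n, b + 1 ≤ n → ω n ∉ ISAp act δ ra := by
    intro n hn hmem
    have := hb hmem
    omega
  have hbot : ∀ n, b + 1 ≤ n → ∀ j, (ω n).1 ≠ Sum.inr j := by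
    intro n hn j hj
    have hav := (hfac n).1
    rw [hj, actp_inr_eq] at hav
    have ha : (ω n).2 = Sum.inr j := by simpa using hav
    apply hnotISA n hn
    right
    exact ⟨j, Prod.ext hj ha⟩
  intro n hn
  rcases hx : (ω n).1 with s | j
  swap
  · exact absurd hx (hbot n hn j)
  · have hav := (hfac n).1
    rw [hx] at hav
    have hni : (Sum.inl s, (ω n).2) ∉ ISAp act δ ra := by
      intro hmem
      apply hnotISA n hn
      rw [show ω n = (Sum.inl s, (ω n).2) from Prod.ext hx rfl]
      exact hmem
    rcases classify hδ hra hav hni with hGmem | ⟨a, ha, hrev⟩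
    · rw [show ω n = (Sum.inl s, (ω n).2) from Prod.ext hx rfl]
      exact hGmem
    · exfalso
      have hker := (hfac n).2
      rw [hx, ha] at hker
      obtain ⟨j, hj⟩ := hrevtgt s a _ hrev hker
      exact hbot (n + 1) (by omega) j hj

lemma measurableSet_HD :
    MeasurableSet {ω : Traj (S ⊕ Fin 2) (A ⊕ Fin 2) |
      (InfOften ω ∩ ISAp act δ ra).Nonempty} := by
  have heq : {ω : Traj (S ⊕ Fin 2) (A ⊕ Fin 2) | (InfOften ω ∩ ISAp act δ ra).Nonempty} =
      ⋃ p : (S ⊕ Fin 2) × (A ⊕ Fin 2),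
        ({ω | p ∈ ISAp act δ ra} ∩ ⋂ N : ℕ, ⋃ n : ℕ, {ω | N ≤ n ∧ ω n = p}) := by
    ext ω
    simp only [Set.mem_setOf_eq, Set.mem_iUnion, Set.mem_inter_iff, Set.mem_iInter]
    constructor
    · rintro ⟨p, hp1, hp2⟩
      refine ⟨p, hp2, fun N => ?_⟩
      obtain ⟨n, hn1, hn2⟩ := (infinite_iff (fun n => ω n = p)).1 hp1 N
      exact ⟨n, hn1, hn2⟩
    · rintro ⟨p, hp2, hp1⟩
      refine ⟨p, ?_, hp2⟩
      exact (infinite_iff (fun n => ω n = p)).2 fun N => hp1 N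
  rw [heq]
  refine MeasurableSet.iUnion fun p => MeasurableSet.inter ?_ ?_
  · by_cases hp : p ∈ ISAp act δ ra
    · have : {ω : Traj (S ⊕ Fin 2) (A ⊕ Fin 2) | p ∈ ISAp act δ ra} = Set.univ := by
        ext ω; simpa using hp
      rw [this]; exact MeasurableSet.univ
    · have : {ω : Traj (S ⊕ Fin 2) (A ⊕ Fin 2) | p ∈ ISAp act δ ra} = ∅ := by
        ext ω; simpa using hp
      rw [this]; exact MeasurableSet.empty
  · refine MeasurableSet.iInter fun N => MeasurableSet.iUnion fun n => ?_
    by_cases hn : N ≤ n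
    · have : {ω : Traj (S ⊕ Fin 2) (A ⊕ Fin 2) | N ≤ n ∧ ω n = p} =
          {ω | ω n ∈ ({p} : Set ((S ⊕ Fin 2) × (A ⊕ Fin 2)))} := by
        ext ω; simp [hn]
      rw [this]; exact measurableSet_eval n _
    · have : {ω : Traj (S ⊕ Fin 2) (A ⊕ Fin 2) | N ≤ n ∧ ω n = p} = ∅ := by
        ext ω; simp [hn]
      rw [this]; exact MeasurableSet.empty

/-- Main per-measure reduction: the event `H_D` has probability one iff every tail
event `Fset N` is null. -/
lemma HD_one_iff
    {e : (S ⊕ Fin 2) → (A ⊕ Fin 2) → (S ⊕ Fin 2) → ℝ}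
    (he : ∀ x a s', 0 ≤ e x a s')
    (habs : ∀ (j : Fin 2) a s', 0 < e (Sum.inr j) a s' → s' = Sum.inr j)
    (hrevtgt : ∀ s a s', RevealingPair δ s a →
      0 < e (Sum.inl s) (Sum.inl a) s' → ∃ j, s' = Sum.inr j)
    (hδ : ∀ i s a s', 0 ≤ δ i s a s')
    (hra : ∀ s, RevealingState act δ s → ra s ∈ act s ∧ RevealingPair δ s (ra s))
    (π : Policy (S ⊕ Fin 2) (A ⊕ Fin 2) (actp act δ ra)) (init' : S ⊕ Fin 2)
    {P : Measure (Traj (S ⊕ Fin 2) (A ⊕ Fin 2))}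
    (hP : IsInduced init' e π.p P) :
    P {ω | (InfOften ω ∩ ISAp act δ ra).Nonempty} = 1 ↔
      ∀ N, P (Fset act δ ra N) = 0 := by
  haveI := hP.1
  rw [← prob_compl_eq_zero_iff (measurableSet_HD (act := act) (δ := δ) (ra := ra))]
  constructor
  · intro h0 N
    refine measure_mono_null ?_ h0
    intro ω hω
    simp only [Set.mem_compl_iff, Set.mem_setOf_eq]
    rintro ⟨p, hp1, hp2⟩
    obtain ⟨n, hn1, hn2⟩ := (infinite_iff (fun n => ω n = p)).1 hp1 N
    exact Gset_disjoint_ISAp (hn2 ▸ hω n hn1) hp2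
  · intro hN
    have hsub : {ω : Traj (S ⊕ Fin 2) (A ⊕ Fin 2) | (InfOften ω ∩ ISAp act δ ra).Nonempty}ᶜ ⊆
        (⋃ N, Fset act δ ra N) ∪ (GoodSet init' e π.p)ᶜ := by
      intro ω hω
      by_cases hg : ω ∈ GoodSet init' e π.p
      · left
        obtain ⟨N, hFN⟩ := good_eventually_G he hrevtgt hδ hra π init' hg hω
        exact Set.mem_iUnion.2 ⟨N, hFN⟩
      · right; exact hg
    refine measure_mono_null hsub
      (measure_union_null (measure_iUnion_null hN)
        (measure_goodSet_compl hP he fun t h a => π.nonneg t h a))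

lemma exists_min_pos {ι : Type} [Fintype ι] (f : ι → ℝ) :
    ∃ c : ℝ, 0 < c ∧ ∀ x, 0 < f x → c ≤ f x := by
  by_cases hne : (Finset.univ.filter (fun x => 0 < f x)).Nonempty
  · obtain ⟨x0, hx0⟩ := hne
    set T := (Finset.univ.filter (fun x => 0 < f x)).image f with hT
    have hTne : T.Nonempty := ⟨f x0, Finset.mem_image_of_mem f hx0⟩
    refine ⟨T.min' hTne, ?_, ?_⟩
    · obtain ⟨y, hy, hfy⟩ := Finset.mem_image.1 (T.min'_mem hTne)
      rw [← hfy]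
      exact (Finset.mem_filter.1 hy).2
    · intro x hx
      exact T.min'_le (f x) (Finset.mem_image_of_mem f
        (Finset.mem_filter.2 ⟨Finset.mem_univ x, hx⟩))
  · exact ⟨1, one_pos, fun x hx =>
      absurd ⟨x, Finset.mem_filter.2 ⟨Finset.mem_univ x, hx⟩⟩ hne⟩

end Main
end InducedAux
end InducedAuxSection
open InducedAux

/-- **Infinitely often visited informative state-action pairs.**
Let `M` be a binary MMDP given by `(act, init, δ 0, δ 1)`, let `M^p` be its preprocessed
MMDP (with chosen revealing actions `ra`), and let `M^I` be any of its informative MDPs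
(with kernel `δ^I = γ·δ₁^p + (1−γ)·δ₂^p`, `γ ∈ (0,1)`).  Let
`H_D = {h : inf(h) ∩ ISA^p ≠ ∅}`.  Then for any policy `π` on the preprocessed MMDP and
the measures `P_I^π, P_1^π, P_2^π` on infinite histories induced from `s_init` by `π` and
the kernels `δ^I, δ₁^p, δ₂^p` respectively:
`P_I^π(H_D) = 1 ↔ P_1^π(H_D) = 1` and `P_I^π(H_D) = 1 ↔ P_2^π(H_D) = 1`. -/
theorem induced_measure_infOften_ISA_iff
    {S A : Type} [Fintype S] [Fintype A] [DecidableEq S] [DecidableEq A]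
    (act : S → Finset A) (hact : ∀ s, (act s).Nonempty) (init : S)
    (δ : Fin 2 → S → A → S → ℝ)
    (hδ0 : ∀ i s a s', 0 ≤ δ i s a s')
    (hδ1 : ∀ i s, ∀ a ∈ act s, ∑ s', δ i s a s' = 1)
    (ra : S → A)
    (hra : ∀ s, RevealingState act δ s → ra s ∈ act s ∧ RevealingPair δ s (ra s))
    (γ : ℝ) (hγ0 : 0 < γ) (hγ1 : γ < 1)
    (π : Policy (S ⊕ Fin 2) (A ⊕ Fin 2) (actp act δ ra))
    (PI P1 P2 : MeasureTheory.Measure (Traj (S ⊕ Fin 2) (A ⊕ Fin 2)))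
    (hPI : IsInduced (Sum.inl init)
      (fun sp ap s'p => γ * δp δ 0 sp ap s'p + (1 - γ) * δp δ 1 sp ap s'p) π.p PI)
    (hP1 : IsInduced (Sum.inl init) (δp δ 0) π.p P1)
    (hP2 : IsInduced (Sum.inl init) (δp δ 1) π.p P2) :
    (PI {ω | (InfOften ω ∩ ISAp act δ ra).Nonempty} = 1 ↔
        P1 {ω | (InfOften ω ∩ ISAp act δ ra).Nonempty} = 1) ∧
    (PI {ω | (InfOften ω ∩ ISAp act δ ra).Nonempty} = 1 ↔
        P2 {ω | (InfOften ω ∩ ISAp act δ ra).Nonempty} = 1) := by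
  classical
  have hγ1' : (0 : ℝ) ≤ 1 - γ := by linarith
  have hγ1p : (0 : ℝ) < 1 - γ := by linarith
  have he0 : ∀ x a s', 0 ≤ δp δ 0 x a s' := δp_nonneg hδ0 0
  have he1 : ∀ x a s', 0 ≤ δp δ 1 x a s' := δp_nonneg hδ0 1
  have heI : ∀ (x : S ⊕ Fin 2) (a : A ⊕ Fin 2) (s' : S ⊕ Fin 2),
      0 ≤ γ * δp δ 0 x a s' + (1 - γ) * δp δ 1 x a s' := fun x a s' =>
    add_nonneg (mul_nonneg (le_of_lt hγ0) (he0 x a s')) (mul_nonneg hγ1' (he1 x a s'))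
  have hπn : ∀ t h a, 0 ≤ π.p t h a := fun t h a => π.nonneg t h a
  have habs0 : ∀ (j : Fin 2) a s', 0 < δp δ 0 (Sum.inr j) a s' → s' = Sum.inr j :=
    fun j a s' h => absorb_δp h
  have habs1 : ∀ (j : Fin 2) a s', 0 < δp δ 1 (Sum.inr j) a s' → s' = Sum.inr j :=
    fun j a s' h => absorb_δp h
  have habsI : ∀ (j : Fin 2) (a : A ⊕ Fin 2) (s' : S ⊕ Fin 2),
      0 < γ * δp δ 0 (Sum.inr j) a s' + (1 - γ) * δp δ 1 (Sum.inr j) a s' →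
        s' = Sum.inr j :=
    fun j a s' h => absorb_dI hδ0 hγ0 hγ1 h
  have hrev0 : ∀ s a s', RevealingPair δ s a →
      0 < δp δ 0 (Sum.inl s) (Sum.inl a) s' → ∃ j, s' = Sum.inr j :=
    fun s a s' hr h => revtgt_δp hr h
  have hrev1 : ∀ s a s', RevealingPair δ s a →
      0 < δp δ 1 (Sum.inl s) (Sum.inl a) s' → ∃ j, s' = Sum.inr j :=
    fun s a s' hr h => revtgt_δp hr h
  have hrevI : ∀ s a s', RevealingPair δ s a →
      0 < γ * δp δ 0 (Sum.inl s) (Sum.inl a) s' +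
        (1 - γ) * δp δ 1 (Sum.inl s) (Sum.inl a) s' → ∃ j, s' = Sum.inr j :=
    fun s a s' hr h => revtgt_dI hδ0 hγ0 hγ1 hr h
  -- kernel equalities on Gset
  have hG01 : ∀ x ∈ Gset act δ ra, δp δ 0 x.1 x.2 = δp δ 1 x.1 x.2 := fun x hx => hx.2.2
  have hG_I0 : ∀ x ∈ Gset act δ ra,
      (fun (sp : S ⊕ Fin 2) (ap : A ⊕ Fin 2) (s'p : S ⊕ Fin 2) =>
        γ * δp δ 0 sp ap s'p + (1 - γ) * δp δ 1 sp ap s'p) x.1 x.2 = δp δ 0 x.1 x.2 := by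
    intro x hx
    funext s'
    have h := congrFun (hG01 x hx) s'
    show γ * δp δ 0 x.1 x.2 s' + (1 - γ) * δp δ 1 x.1 x.2 s' = δp δ 0 x.1 x.2 s'
    rw [← h]; ring
  have hG_0I : ∀ x ∈ Gset act δ ra, δp δ 0 x.1 x.2 =
      (fun (sp : S ⊕ Fin 2) (ap : A ⊕ Fin 2) (s'p : S ⊕ Fin 2) =>
        γ * δp δ 0 sp ap s'p + (1 - γ) * δp δ 1 sp ap s'p) x.1 x.2 :=
    fun x hx => (hG_I0 x hx).symm
  have hG_I1 : ∀ x ∈ Gset act δ ra,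
      (fun (sp : S ⊕ Fin 2) (ap : A ⊕ Fin 2) (s'p : S ⊕ Fin 2) =>
        γ * δp δ 0 sp ap s'p + (1 - γ) * δp δ 1 sp ap s'p) x.1 x.2 = δp δ 1 x.1 x.2 := by
    intro x hx
    funext s'
    have h := congrFun (hG01 x hx) s'
    show γ * δp δ 0 x.1 x.2 s' + (1 - γ) * δp δ 1 x.1 x.2 s' = δp δ 1 x.1 x.2 s'
    rw [h]; ring
  have hG_1I : ∀ x ∈ Gset act δ ra, δp δ 1 x.1 x.2 =
      (fun (sp : S ⊕ Fin 2) (ap : A ⊕ Fin 2) (s'p : S ⊕ Fin 2) =>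
        γ * δp δ 0 sp ap s'p + (1 - γ) * δp δ 1 sp ap s'p) x.1 x.2 :=
    fun x hx => (hG_I1 x hx).symm
  -- constants
  obtain ⟨c0, hc0p, hc0⟩ := exists_min_pos
    (fun x : (S ⊕ Fin 2) × (A ⊕ Fin 2) × (S ⊕ Fin 2) => δp δ 0 x.1 x.2.1 x.2.2)
  obtain ⟨c1, hc1p, hc1⟩ := exists_min_pos
    (fun x : (S ⊕ Fin 2) × (A ⊕ Fin 2) × (S ⊕ Fin 2) => δp δ 1 x.1 x.2.1 x.2.2)
  obtain ⟨D, hD⟩ := Finite.exists_le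
    (fun x : (S ⊕ Fin 2) × (A ⊕ Fin 2) × (S ⊕ Fin 2) =>
      γ * δp δ 0 x.1 x.2.1 x.2.2 + (1 - γ) * δp δ 1 x.1 x.2.1 x.2.2)
  have hKfI0 : ∀ (s : S) (a : A ⊕ Fin 2) (s' : S),
      0 < γ * δp δ 0 (Sum.inl s) a (Sum.inl s') + (1 - γ) * δp δ 1 (Sum.inl s) a (Sum.inl s') →
      γ * δp δ 0 (Sum.inl s) a (Sum.inl s') + (1 - γ) * δp δ 1 (Sum.inl s) a (Sum.inl s') ≤
        max 1 (D / c0) * δp δ 0 (Sum.inl s) a (Sum.inl s') := by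
    intro s a s' hpos
    obtain ⟨h0, _⟩ := dI_pos_inl hδ0 hγ0 hγ1 hpos
    have hup : γ * δp δ 0 (Sum.inl s) a (Sum.inl s') +
        (1 - γ) * δp δ 1 (Sum.inl s) a (Sum.inl s') ≤ D := hD ⟨Sum.inl s, a, Sum.inl s'⟩
    have hlow : c0 ≤ δp δ 0 (Sum.inl s) a (Sum.inl s') := hc0 ⟨Sum.inl s, a, Sum.inl s'⟩ h0
    have hDpos : 0 < D := lt_of_lt_of_le hpos hup
    calc γ * δp δ 0 (Sum.inl s) a (Sum.inl s') + (1 - γ) * δp δ 1 (Sum.inl s) a (Sum.inl s')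
        ≤ D := hup
      _ = D / c0 * c0 := (div_mul_cancel₀ D (ne_of_gt hc0p)).symm
      _ ≤ D / c0 * δp δ 0 (Sum.inl s) a (Sum.inl s') :=
          mul_le_mul_of_nonneg_left hlow (le_of_lt (div_pos hDpos hc0p))
      _ ≤ max 1 (D / c0) * δp δ 0 (Sum.inl s) a (Sum.inl s') :=
          mul_le_mul_of_nonneg_right (le_max_right _ _) (he0 _ _ _)
  have hKfI1 : ∀ (s : S) (a : A ⊕ Fin 2) (s' : S),
      0 < γ * δp δ 0 (Sum.inl s) a (Sum.inl s') + (1 - γ) * δp δ 1 (Sum.inl s) a (Sum.inl s') →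
      γ * δp δ 0 (Sum.inl s) a (Sum.inl s') + (1 - γ) * δp δ 1 (Sum.inl s) a (Sum.inl s') ≤
        max 1 (D / c1) * δp δ 1 (Sum.inl s) a (Sum.inl s') := by
    intro s a s' hpos
    obtain ⟨_, h1⟩ := dI_pos_inl hδ0 hγ0 hγ1 hpos
    have hup : γ * δp δ 0 (Sum.inl s) a (Sum.inl s') +
        (1 - γ) * δp δ 1 (Sum.inl s) a (Sum.inl s') ≤ D := hD ⟨Sum.inl s, a, Sum.inl s'⟩
    have hlow : c1 ≤ δp δ 1 (Sum.inl s) a (Sum.inl s') := hc1 ⟨Sum.inl s, a, Sum.inl s'⟩ h1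
    have hDpos : 0 < D := lt_of_lt_of_le hpos hup
    calc γ * δp δ 0 (Sum.inl s) a (Sum.inl s') + (1 - γ) * δp δ 1 (Sum.inl s) a (Sum.inl s')
        ≤ D := hup
      _ = D / c1 * c1 := (div_mul_cancel₀ D (ne_of_gt hc1p)).symm
      _ ≤ D / c1 * δp δ 1 (Sum.inl s) a (Sum.inl s') :=
          mul_le_mul_of_nonneg_left hlow (le_of_lt (div_pos hDpos hc1p))
      _ ≤ max 1 (D / c1) * δp δ 1 (Sum.inl s) a (Sum.inl s') :=
          mul_le_mul_of_nonneg_right (le_max_right _ _) (he1 _ _ _)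
  have hKf0I : ∀ (s : S) (a : A ⊕ Fin 2) (s' : S),
      0 < δp δ 0 (Sum.inl s) a (Sum.inl s') →
      δp δ 0 (Sum.inl s) a (Sum.inl s') ≤
        max 1 γ⁻¹ * (γ * δp δ 0 (Sum.inl s) a (Sum.inl s') +
          (1 - γ) * δp δ 1 (Sum.inl s) a (Sum.inl s')) := by
    intro s a s' _
    have h1 : γ * δp δ 0 (Sum.inl s) a (Sum.inl s') ≤
        γ * δp δ 0 (Sum.inl s) a (Sum.inl s') + (1 - γ) * δp δ 1 (Sum.inl s) a (Sum.inl s') :=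
      le_add_of_nonneg_right (mul_nonneg hγ1' (he1 _ _ _))
    have h2 := mul_le_mul_of_nonneg_left h1 (le_of_lt (inv_pos.2 hγ0))
    rw [← mul_assoc, inv_mul_cancel₀ (ne_of_gt hγ0), one_mul] at h2
    calc δp δ 0 (Sum.inl s) a (Sum.inl s')
        ≤ γ⁻¹ * (γ * δp δ 0 (Sum.inl s) a (Sum.inl s') +
            (1 - γ) * δp δ 1 (Sum.inl s) a (Sum.inl s')) := h2
      _ ≤ max 1 γ⁻¹ * (γ * δp δ 0 (Sum.inl s) a (Sum.inl s') +
            (1 - γ) * δp δ 1 (Sum.inl s) a (Sum.inl s')) :=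
          mul_le_mul_of_nonneg_right (le_max_right _ _) (heI _ _ _)
  have hKf1I : ∀ (s : S) (a : A ⊕ Fin 2) (s' : S),
      0 < δp δ 1 (Sum.inl s) a (Sum.inl s') →
      δp δ 1 (Sum.inl s) a (Sum.inl s') ≤
        max 1 (1 - γ)⁻¹ * (γ * δp δ 0 (Sum.inl s) a (Sum.inl s') +
          (1 - γ) * δp δ 1 (Sum.inl s) a (Sum.inl s')) := by
    intro s a s' _
    have h1 : (1 - γ) * δp δ 1 (Sum.inl s) a (Sum.inl s') ≤
        γ * δp δ 0 (Sum.inl s) a (Sum.inl s') + (1 - γ) * δp δ 1 (Sum.inl s) a (Sum.inl s') :=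
      le_add_of_nonneg_left (mul_nonneg (le_of_lt hγ0) (he0 _ _ _))
    have h2 := mul_le_mul_of_nonneg_left h1 (le_of_lt (inv_pos.2 hγ1p))
    rw [← mul_assoc, inv_mul_cancel₀ (ne_of_gt hγ1p), one_mul] at h2
    calc δp δ 1 (Sum.inl s) a (Sum.inl s')
        ≤ (1 - γ)⁻¹ * (γ * δp δ 0 (Sum.inl s) a (Sum.inl s') +
            (1 - γ) * δp δ 1 (Sum.inl s) a (Sum.inl s')) := h2
      _ ≤ max 1 (1 - γ)⁻¹ * (γ * δp δ 0 (Sum.inl s) a (Sum.inl s') +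
            (1 - γ) * δp δ 1 (Sum.inl s) a (Sum.inl s')) :=
          mul_le_mul_of_nonneg_right (le_max_right _ _) (heI _ _ _)
  -- per-measure reductions
  have hiffI := HD_one_iff heI habsI hrevI hδ0 hra π (Sum.inl init) hPI
  have hiff1 := HD_one_iff he0 habs0 hrev0 hδ0 hra π (Sum.inl init) hP1
  have hiff2 := HD_one_iff he1 habs1 hrev1 hδ0 hra π (Sum.inl init) hP2
  have hFI1 : (∀ N, PI (Fset act δ ra N) = 0) ↔ (∀ N, P1 (Fset act δ ra N) = 0) :=
    ⟨fun h N => measure_Fset_null he0 heI hπn habs0 hG_0I (le_max_left _ _) hKf0I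
        (Sum.inl init) hP1 hPI N (h N),
     fun h N => measure_Fset_null heI he0 hπn habsI hG_I0 (le_max_left _ _) hKfI0
        (Sum.inl init) hPI hP1 N (h N)⟩
  have hFI2 : (∀ N, PI (Fset act δ ra N) = 0) ↔ (∀ N, P2 (Fset act δ ra N) = 0) :=
    ⟨fun h N => measure_Fset_null he1 heI hπn habs1 hG_1I (le_max_left _ _) hKf1I
        (Sum.inl init) hP2 hPI N (h N),
     fun h N => measure_Fset_null heI he1 hπn habsI hG_I1 (le_max_left _ _) hKfI1
        (Sum.inl init) hPI hP2 N (h N)⟩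
  constructor
  · rw [hiffI, hiff1]; exact hFI1
  · rw [hiffI, hiff2]; exact hFI2
end
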